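/- arXiv:1511.02475 — 5 statements merged into one kernel-verified Lean document; each statement's English description precedes it below -/
import Mathlib

section
/- Let G be a cubic graph (3-regular multigraph without loops) containing at most two bridges. Then G has a perfect matching. -/
open scoped Classical

/-- A finite undirected multigraph (possibly with loops and parallel edges),
given by a vertex type, an edge type, and an endpoints map. -/
structure Multigraph where
  V : Type
  E : Type
  [fintV : Fintype V]
  [fintE : Fintype E]
  [decV : DecidableEq V]
  [decE : DecidableEq E]
  ends : E → Sym2 V

namespace Multigraph

attribute [instance] Multigraph.fintV Multigraph.fintE Multigraph.decV Multigraph.decE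

variable (G : Multigraph)

/-- The number of times `v` occurs as an endpoint of `e` (2 for a loop at `v`). -/
def incCount (v : G.V) (e : G.E) : ℕ :=
  if G.ends e = Sym2.diag v then 2 else if v ∈ G.ends e then 1 else 0

/-- Degree of a vertex (a loop contributes 2). -/
def degree (v : G.V) : ℕ := ∑ e : G.E, G.incCount v e

/-- The set `∂_G(v)` of edges incident to `v`. -/
def star (v : G.V) : Finset G.E := Finset.univ.filter fun e => v ∈ G.ends e

/-- No loops. -/
def Loopless : Prop := ∀ e : G.E, ¬ (G.ends e).IsDiag

/-- A cubic graph: loopless and 3-regular (parallel edges allowed). -/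
def Cubic : Prop := G.Loopless ∧ ∀ v : G.V, G.degree v = 3

/-- A cubic pseudo-graph: 3-regular, loops and parallel edges allowed. -/
def CubicPseudo : Prop := ∀ v : G.V, G.degree v = 3

/-- A simple graph: no loops and no parallel edges. -/
def Simple : Prop := G.Loopless ∧ ∀ e e' : G.E, G.ends e = G.ends e' → e = e'

/-- Two edges are adjacent if they are distinct and share an endpoint. -/
def EdgeAdj (e e' : G.E) : Prop :=
  e ≠ e' ∧ ∃ v : G.V, v ∈ G.ends e ∧ v ∈ G.ends e'

/-- A matching: a set of pairwise non-adjacent edges. -/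
def IsMatching (M : Set G.E) : Prop :=
  ∀ e ∈ M, ∀ e' ∈ M, e ≠ e' → ¬ ∃ v : G.V, v ∈ G.ends e ∧ v ∈ G.ends e'

/-- A perfect matching: a matching covering every vertex. -/
def IsPerfectMatching (M : Set G.E) : Prop :=
  G.IsMatching M ∧ ∀ v : G.V, ∃ e ∈ M, v ∈ G.ends e

/-- Degree of `v` within the spanning subgraph with edge set `A`. -/
noncomputable def degIn (A : Set G.E) (v : G.V) : ℕ :=
  ∑ e : G.E, if e ∈ A then G.incCount v e else 0

/-- `A` is the edge set of a `k`-factor: a spanning `k`-regular subgraph. -/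
def IsKFactor (k : ℕ) (A : Set G.E) : Prop := ∀ v : G.V, G.degIn A v = k

/-- `A` is the edge set of an even subgraph. -/
def EvenSubgraph (A : Set G.E) : Prop := ∀ v : G.V, Even (G.degIn A v)

/-- Reachability using only edges from `A`. -/
def Reach (A : Set G.E) : G.V → G.V → Prop :=
  Relation.ReflTransGen fun a b => ∃ e ∈ A, G.ends e = s(a, b)

/-- Connectedness. -/
def Connected : Prop := ∀ u v : G.V, G.Reach Set.univ u v

/-- A bridge: an edge whose removal disconnects its endpoints. -/
def IsBridge (e : G.E) : Prop :=
  ∀ u w : G.V, G.ends e = s(u, w) → ¬ G.Reach {e' | e' ≠ e} u w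

/-- The chromatic index: least number of colors of a proper edge coloring. -/
noncomputable def chromaticIndex : ℕ :=
  sInf {n | ∃ c : G.E → Fin n, ∀ e e', G.EdgeAdj e e' → c e ≠ c e'}

/-- A triangle on distinct vertices `u, v, w` with edges `e₁, e₂, e₃`. -/
def IsTriangle (e₁ e₂ e₃ : G.E) (u v w : G.V) : Prop :=
  u ≠ v ∧ v ≠ w ∧ u ≠ w ∧
    G.ends e₁ = s(u, v) ∧ G.ends e₂ = s(v, w) ∧ G.ends e₃ = s(u, w)

/-- Triangle-freeness. -/
def TriangleFree : Prop :=
  ¬ ∃ (e₁ e₂ e₃ : G.E) (u v w : G.V), G.IsTriangle e₁ e₂ e₃ u v w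

/-- An isomorphism of multigraphs. -/
structure Iso (G H : Multigraph) where
  vEquiv : G.V ≃ H.V
  eEquiv : G.E ≃ H.E
  ends_map : ∀ e : G.E, H.ends (eEquiv e) = (G.ends e).map vEquiv

/-- `G` and `H` are isomorphic. -/
def IsIsomorphicTo (G H : Multigraph) : Prop := Nonempty (Iso G H)

/-- An `H`-coloring of `G`: `f(∂_G(x)) = ∂_H(y)` for every vertex `x` of `G`,
some vertex `y` of `H`. -/
def IsHColoring (G H : Multigraph) (f : G.E → H.E) : Prop :=
  ∀ x : G.V, ∃ y : H.V, (G.star x).image f = H.star y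

/-- The set `V(f)` of vertices of `G` satisfying the `H`-coloring condition under `f`. -/
def colVerts (G H : Multigraph) (f : G.E → H.E) : Set G.V :=
  {x : G.V | ∃ y : H.V, (G.star x).image f = H.star y}

/-- The incidence multiset of a vertex: each incident edge with its multiplicity
(a loop occurs twice). -/
noncomputable def incMultiset (v : G.V) : Multiset G.E :=
  ∑ e : G.E, (G.incCount v e) • ({e} : Multiset G.E)

end Multigraph

/-- The Petersen graph. -/
def Petersen : Multigraph where
  V := Fin 10
  E := {p : Sym2 (Fin 10) //
    p ∈ ({s(0,1), s(1,2), s(2,3), s(3,4), s(4,0),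
          s(0,5), s(1,6), s(2,7), s(3,8), s(4,9),
          s(5,7), s(7,9), s(9,6), s(6,8), s(8,5)} : Finset (Sym2 (Fin 10)))}
  ends := Subtype.val

/-- The Sylvester graph `S` on 10 vertices: a central vertex 0 joined by three
bridges to three end-blocks; each end-block is a 3-vertex multigraph whose two
non-root vertices are joined by a pair of parallel edges. -/
def SylvesterS : Multigraph where
  V := Fin 10
  E := Fin 15
  ends := ![s(0,1), s(1,2), s(1,3), s(2,3), s(2,3),
            s(0,4), s(4,5), s(4,6), s(5,6), s(5,6),
            s(0,7), s(7,8), s(7,9), s(8,9), s(8,9)]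

/-- The Sylvester simple graph `S₁₆` on 16 vertices: central vertex 0 joined by
bridges to three 5-vertex end-blocks with edges
(v1,v2),(v1,v3),(v1,v4),(v2,v3),(v2,v4),(v3,v5),(v4,v5). -/
def Sylvester16 : Multigraph where
  V := Fin 16
  E := {p : Sym2 (Fin 16) //
    p ∈ ({s(1,2), s(1,3), s(1,4), s(2,3), s(2,4), s(3,5), s(4,5), s(0,5),
          s(6,7), s(6,8), s(6,9), s(7,8), s(7,9), s(8,10), s(9,10), s(0,10),
          s(11,12), s(11,13), s(11,14), s(12,13), s(12,14), s(13,15), s(14,15),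
          s(0,15)} : Finset (Sym2 (Fin 16)))}
  ends := Subtype.val

/-- The graph `S'` on 10 vertices: two 5-vertex blocks, each consisting of a
triangle v1v2v3 together with edges (v1,v4),(v2,v4),(v3,v5),(v4,v5), joined by
a bridge between the two degree-2 vertices. -/
def Sprime : Multigraph where
  V := Fin 10
  E := {p : Sym2 (Fin 10) //
    p ∈ ({s(0,1), s(0,2), s(1,2), s(0,3), s(1,3), s(2,4), s(3,4),
          s(5,6), s(5,7), s(6,7), s(5,8), s(6,8), s(7,9), s(8,9),
          s(4,9)} : Finset (Sym2 (Fin 10)))}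
  ends := Subtype.val

/-- The Sylvester pseudo-graph `S₄` on 4 vertices: a central vertex 0 joined to
vertices 1, 2, 3 (edges `a = 0`, `b = 1`, `c = 2`), each of which carries a loop
(`a' = 3`, `b' = 4`, `c' = 5`). -/
def S4 : Multigraph where
  V := Fin 4
  E := Fin 6
  ends := ![s(0,1), s(0,2), s(0,3), s(1,1), s(2,2), s(3,3)]



set_option linter.unusedSectionVars false
namespace PM

variable {V : Type} [Fintype V] [DecidableEq V] (G : SimpleGraph V)

/-- One step of reachability inside the vertex set `D`. -/
noncomputable def step (D : Finset V) (a b : V) : Prop := a ∈ D ∧ b ∈ D ∧ G.Adj a b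

/-- Reachability inside the vertex set `D`. -/
noncomputable def rch (D : Finset V) (u v : V) : Prop := Relation.ReflTransGen (step G D) u v

/-- Connected component of `v` inside the vertex set `D`. -/
noncomputable def comp (D : Finset V) (v : V) : Finset V := D.filter (rch G D v)

/-- The set of connected components inside `D`. -/
noncomputable def comps (D : Finset V) : Finset (Finset V) := D.image (comp G D)

/-- The odd components inside `D`. -/
noncomputable def oddComps (D : Finset V) : Finset (Finset V) := (comps G D).filter fun C => Odd C.card

/-- Number of odd components inside `D`. -/
noncomputable def qq (D : Finset V) : ℕ := (oddComps G D).card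

variable {G}

lemma step_symm {D : Finset V} : Symmetric (step G D) := fun _ _ h => ⟨h.2.1, h.1, h.2.2.symm⟩

lemma rch_symm {D : Finset V} {u v : V} (h : rch G D u v) : rch G D v u :=
  (@Relation.ReflTransGen.stdSymm _ _ ⟨fun _ _ h => step_symm h⟩).symm _ _ h

lemma rch_trans {D : Finset V} {u v w : V} (h : rch G D u v) (h' : rch G D v w) :
    rch G D u w := h.trans h'

lemma mem_comp_iff {D : Finset V} {u v : V} : v ∈ comp G D u ↔ v ∈ D ∧ rch G D u v :=
  Finset.mem_filter

lemma mem_comp_self {D : Finset V} {v : V} (hv : v ∈ D) : v ∈ comp G D v :=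
  mem_comp_iff.2 ⟨hv, Relation.ReflTransGen.refl⟩

lemma comp_subset {D : Finset V} {v : V} : comp G D v ⊆ D := Finset.filter_subset _ _

lemma comp_eq_of_rch {D : Finset V} {u v : V} (h : rch G D u v) : comp G D u = comp G D v := by
  ext w
  simp only [mem_comp_iff]
  exact ⟨fun hw => ⟨hw.1, rch_trans (rch_symm h) hw.2⟩, fun hw => ⟨hw.1, rch_trans h hw.2⟩⟩

lemma comp_eq_of_mem {D : Finset V} {u v : V} (h : v ∈ comp G D u) : comp G D u = comp G D v :=
  comp_eq_of_rch (mem_comp_iff.1 h).2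

lemma comp_mem_comps {D : Finset V} {v : V} (hv : v ∈ D) : comp G D v ∈ comps G D :=
  Finset.mem_image_of_mem _ hv

lemma comps_nonempty {D : Finset V} {C : Finset V} (hC : C ∈ comps G D) : C.Nonempty := by
  obtain ⟨v, hv, rfl⟩ := Finset.mem_image.1 hC
  exact ⟨v, mem_comp_self hv⟩

lemma comps_subset {D : Finset V} {C : Finset V} (hC : C ∈ comps G D) : C ⊆ D := by
  obtain ⟨v, hv, rfl⟩ := Finset.mem_image.1 hC
  exact comp_subset

lemma comp_eq_of_mem_comps {D : Finset V} {C : Finset V} (hC : C ∈ comps G D) {v : V}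
    (hv : v ∈ C) : C = comp G D v := by
  obtain ⟨u, hu, rfl⟩ := Finset.mem_image.1 hC
  exact comp_eq_of_mem hv

/-- Components are closed under adjacency within `D`. -/
lemma adj_mem_comp {D : Finset V} {C : Finset V} (hC : C ∈ comps G D) {u w : V}
    (hu : u ∈ C) (hw : w ∈ D) (h : G.Adj u w) : w ∈ C := by
  rw [comp_eq_of_mem_comps hC hu]
  exact mem_comp_iff.2 ⟨hw, Relation.ReflTransGen.single ⟨comps_subset hC hu, hw, h⟩⟩

lemma comps_disjoint {D : Finset V} {C C' : Finset V} (hC : C ∈ comps G D)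
    (hC' : C' ∈ comps G D) (hne : C ≠ C') : Disjoint C C' := by
  rw [Finset.disjoint_left]
  intro w hw hw'
  exact hne ((comp_eq_of_mem_comps hC hw).trans (comp_eq_of_mem_comps hC' hw').symm)

/-- Key restriction lemma: if `D₂ ⊆ D'` is closed under adjacency within `D'`,
then components inside `D₂` of points of `D₂` agree with their components inside `D'`. -/
lemma comp_restrict {D' D₂ : Finset V} (hsub : D₂ ⊆ D')
    (hcl : ∀ a ∈ D₂, ∀ b ∈ D', G.Adj a b → b ∈ D₂) {u : V} (hu : u ∈ D₂) :
    comp G D' u = comp G D₂ u := by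
  ext w
  simp only [mem_comp_iff]
  constructor
  · rintro ⟨hw, hr⟩
    have key : ∀ x, rch G D' u x → x ∈ D₂ ∧ rch G D₂ u x := by
      intro x hx
      induction hx with
      | refl => exact ⟨hu, Relation.ReflTransGen.refl⟩
      | tail h step ih =>
        rename_i a b
        have hb : b ∈ D₂ := hcl a ih.1 b step.2.1 step.2.2
        exact ⟨hb, ih.2.tail ⟨ih.1, hb, step.2.2⟩⟩
    exact key w hr
  · rintro ⟨hw, hr⟩
    exact ⟨hsub hw, Relation.ReflTransGen.mono (fun a b h => ⟨hsub h.1, hsub h.2.1, h.2.2⟩) _ _ hr⟩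

lemma comp_mono {D₂ D' : Finset V} (hsub : D₂ ⊆ D') {u : V} : comp G D₂ u ⊆ comp G D' u := by
  intro w hw
  rw [mem_comp_iff] at hw ⊢
  exact ⟨hsub hw.1, Relation.ReflTransGen.mono (fun a b h => ⟨hsub h.1, hsub h.2.1, h.2.2⟩) _ _ hw.2⟩

/-- `D` is the disjoint union of its components. -/
lemma biUnion_comps (D : Finset V) : (comps G D).biUnion id = D := by
  ext v
  simp only [Finset.mem_biUnion, id]
  constructor
  · rintro ⟨C, hC, hv⟩; exact comps_subset hC hv
  · intro hv; exact ⟨comp G D v, comp_mem_comps hv, mem_comp_self hv⟩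

lemma sum_comps_card (D : Finset V) : ∑ C ∈ comps G D, C.card = D.card := by
  conv_rhs => rw [← biUnion_comps (G := G) D]
  rw [show ((comps G D).biUnion id) = ((comps G D).biUnion fun C => C) from rfl,
    Finset.card_biUnion (fun C hC C' hC' hne => comps_disjoint hC hC' hne)]

/-- Parity: `|D| ≡ q(D) (mod 2)`. -/
lemma qq_parity (D : Finset V) : (D.card : ZMod 2) = (qq G D : ZMod 2) := by
  have h := sum_comps_card (G := G) D
  have : (D.card : ZMod 2) = ∑ C ∈ comps G D, (C.card : ZMod 2) := by
    rw [← h]; push_cast; ring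
  rw [this, ← Finset.sum_filter_add_sum_filter_not (comps G D) (fun C => Odd C.card)]
  have h1 : ∀ C ∈ (comps G D).filter (fun C => Odd C.card), (C.card : ZMod 2) = 1 := by
    intro C hC
    have := (Finset.mem_filter.1 hC).2
    rw [Nat.odd_iff] at this
    rw [← ZMod.natCast_mod, this]; rfl
  have h2 : ∀ C ∈ (comps G D).filter (fun C => ¬ Odd C.card), (C.card : ZMod 2) = 0 := by
    intro C hC
    have := (Finset.mem_filter.1 hC).2
    rw [Nat.not_odd_iff_even, Nat.even_iff] at this
    rw [← ZMod.natCast_mod, this]; rfl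
  rw [Finset.sum_congr rfl h1, Finset.sum_congr rfl h2]
  simp [qq, oddComps]


/-- A perfect matching on the vertex set `A`, encoded as an involution. -/
def IsPMOn (G : SimpleGraph V) (A : Finset V) (m : V → V) : Prop :=
  ∀ v ∈ A, m v ∈ A ∧ m v ≠ v ∧ G.Adj v (m v) ∧ m (m v) = v

/-- Tutte's condition relative to the ambient vertex set `A`. -/
def TutteCond (G : SimpleGraph V) (A : Finset V) : Prop :=
  ∀ S ⊆ A, qq G (A \ S) ≤ S.card

/-- Transfer of components between ambient vertex sets. -/
lemma mem_comps_transfer {D D' C : Finset V} (hC : C ∈ comps G D) (hsub : C ⊆ D')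
    (hcl : ∀ a ∈ C, ∀ b ∈ D', G.Adj a b → b ∈ C) : C ∈ comps G D' := by
  obtain ⟨v, hv⟩ := comps_nonempty hC
  have hCD : C ⊆ D := comps_subset hC
  have h1 : comp G D v = comp G C v := by
    refine comp_restrict hCD (fun a ha b hb hab => adj_mem_comp hC ha hb hab) ?_
    · exact hv
  have h2 : comp G D' v = comp G C v :=
    comp_restrict hsub (fun a ha b hb hab => hcl a ha b hb hab) hv
  have : comp G D' v = C := by
    rw [h2, ← h1, ← comp_eq_of_mem_comps hC hv]
  rw [← this]
  exact comp_mem_comps (hsub hv)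

lemma two_families_card_le {X : Finset V} {𝒜 ℬ : Finset (Finset V)}
    (hA : 𝒜 ⊆ oddComps G X) (hB : ℬ ⊆ oddComps G X) (hd : Disjoint 𝒜 ℬ) :
    𝒜.card + ℬ.card ≤ qq G X := by
  rw [← Finset.card_union_of_disjoint hd]
  exact Finset.card_le_card (Finset.union_subset hA hB)

lemma mem_oddComps_iff {X C : Finset V} :
    C ∈ oddComps G X ↔ C ∈ comps G X ∧ Odd C.card := Finset.mem_filter

/-- A nonempty disjoint family of components covering a finset of odd cardinality
contains an odd member: used via sums. -/
lemma exists_odd_comp_of_cover {X Y : Finset V} (hYX : Y ⊆ X)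
    (hcomp : ∀ w ∈ Y, comp G X w ⊆ Y) (hodd : Odd Y.card) :
    ∃ K ∈ oddComps G X, K ⊆ Y := by
  by_contra hcon
  push_neg at hcon
  have hKY : ∀ w ∈ Y, Even (comp G X w).card := by
    intro w hw
    by_contra heven
    rw [Nat.not_even_iff_odd] at heven
    exact (hcon (comp G X w) (mem_oddComps_iff.2 ⟨comp_mem_comps (hYX hw), heven⟩))
      (hcomp w hw)
  -- Y is the disjoint union of the components of its points
  have hYeq : Y = ((Y.image (comp G X)).biUnion id) := by
    ext v
    simp only [Finset.mem_biUnion, Finset.mem_image, id]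
    constructor
    · intro hv; exact ⟨comp G X v, ⟨v, hv, rfl⟩, mem_comp_self (hYX hv)⟩
    · rintro ⟨K, ⟨w, hw, rfl⟩, hvK⟩; exact hcomp w hw hvK
  have hdisj : ∀ K ∈ Y.image (comp G X), ∀ K' ∈ Y.image (comp G X), K ≠ K' →
      Disjoint K K' := by
    intro K hK K' hK' hne
    obtain ⟨w, hw, rfl⟩ := Finset.mem_image.1 hK
    obtain ⟨w', hw', rfl⟩ := Finset.mem_image.1 hK'
    exact comps_disjoint (comp_mem_comps (hYX hw)) (comp_mem_comps (hYX hw')) hne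
  have : Even Y.card := by
    rw [hYeq, show ((Y.image (comp G X)).biUnion id) = ((Y.image (comp G X)).biUnion fun K => K)
      from rfl, Finset.card_biUnion hdisj]
    apply Finset.even_sum
    intro K hK
    obtain ⟨w, hw, rfl⟩ := Finset.mem_image.1 hK
    exact hKY w hw
  exact (Nat.not_even_iff_odd.2 hodd) this

set_option maxHeartbeats 1000000 in
/-- Tutte's theorem (hard direction), for matchings-as-involutions. -/
theorem tutte : ∀ (n : ℕ) (A : Finset V), A.card ≤ n → TutteCond G A →
    ∃ m, IsPMOn G A m := by
  intro n
  induction n with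
  | zero =>
    intro A hA _
    have : A = ∅ := Finset.card_eq_zero.1 (Nat.le_zero.1 hA)
    exact ⟨id, by simp [this, IsPMOn]⟩
  | succ n ih =>
    intro A hAcard ht
    -- the family of sets achieving equality in Tutte's condition
    set 𝒮 : Finset (Finset V) :=
      A.powerset.filter (fun S => qq G (A \ S) = S.card) with h𝒮
    have hempty : ∅ ∈ 𝒮 := by
      simp only [h𝒮, Finset.mem_filter, Finset.mem_powerset, Finset.empty_subset, true_and,
        Finset.sdiff_empty, Finset.card_empty]
      exact Nat.le_zero.1 (by simpa using ht ∅ (Finset.empty_subset A))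
    obtain ⟨S, hS𝒮, hmax⟩ := Finset.exists_max_image 𝒮 Finset.card ⟨∅, hempty⟩
    have hSsub : S ⊆ A := Finset.mem_powerset.1 (Finset.mem_filter.1 hS𝒮).1
    have hSq : qq G (A \ S) = S.card := (Finset.mem_filter.1 hS𝒮).2
    set D : Finset V := A \ S with hD
    have hDA : D ⊆ A := Finset.sdiff_subset
    have hDS : ∀ v ∈ D, v ∉ S := fun v hv => (Finset.mem_sdiff.1 hv).2
    have hAD : ∀ v ∈ A, v ∉ S → v ∈ D := fun v hv hvs => Finset.mem_sdiff.2 ⟨hv, hvs⟩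
    -- Claim 1: every component of D is odd
    have hodd : ∀ C ∈ comps G D, Odd C.card := by
      intro C hC
      by_contra hCodd
      rw [Nat.not_odd_iff_even] at hCodd
      obtain ⟨v, hvC⟩ := comps_nonempty hC
      have hvD : v ∈ D := comps_subset hC hvC
      set S' : Finset V := insert v S with hS'
      have hS'sub : S' ⊆ A := Finset.insert_subset (hDA hvD) hSsub
      have hS'card : S'.card = S.card + 1 := Finset.card_insert_of_notMem (hDS v hvD)
      have hD' : A \ S' = D.erase v := by
        ext w
        simp only [hS', hD, Finset.mem_sdiff, Finset.mem_insert, Finset.mem_erase]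
        tauto
      -- every odd component of D other than C is an odd component of D.erase v
      have htransfer : ∀ C₁ ∈ oddComps G D, C₁ ∈ oddComps G (D.erase v) := by
        intro C₁ hC₁
        obtain ⟨hC₁c, hC₁odd⟩ := mem_oddComps_iff.1 hC₁
        have hne : C₁ ≠ C := by
          rintro rfl
          exact (Nat.not_even_iff_odd.2 hC₁odd) hCodd
        have hdisj : Disjoint C₁ C := comps_disjoint hC₁c hC hne
        refine mem_oddComps_iff.2 ⟨mem_comps_transfer hC₁c ?_ ?_, hC₁odd⟩
        · intro w hw
          refine Finset.mem_erase.2 ⟨?_, comps_subset hC₁c hw⟩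
          rintro rfl
          exact (Finset.disjoint_left.1 hdisj hw) hvC
        · intro a ha b hb hab
          exact adj_mem_comp hC₁c ha (Finset.mem_of_mem_erase hb) hab
      -- there is a new odd component inside C.erase v
      have hnew : ∃ K ∈ oddComps G (D.erase v), K ⊆ C.erase v := by
        refine exists_odd_comp_of_cover ?_ ?_ ?_
        · intro w hw
          exact Finset.mem_erase.2 ⟨(Finset.mem_erase.1 hw).1,
            comps_subset hC (Finset.mem_of_mem_erase hw)⟩
        · intro w hw x hx
          have hxD : x ∈ D.erase v := mem_comp_iff.1 hx |>.1
          have hxC : x ∈ C := by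
            have h1 : comp G (D.erase v) w ⊆ comp G D w := comp_mono (Finset.erase_subset _ _)
            have h2 : comp G D w = C :=
              (comp_eq_of_mem_comps hC (Finset.mem_of_mem_erase hw)).symm
            exact h2 ▸ h1 hx
          exact Finset.mem_erase.2 ⟨(Finset.mem_erase.1 hxD).1, hxC⟩
        · rw [Finset.card_erase_of_mem hvC]
          have h1 := hCodd
          rw [Nat.even_iff] at h1
          have : 0 < C.card := Finset.card_pos.2 ⟨v, hvC⟩
          rw [Nat.odd_iff]
          omega
      obtain ⟨K, hK, hKsub⟩ := hnew
      have hKC : K ∉ oddComps G D := by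
        intro hKD
        obtain ⟨hKc, hKodd⟩ := mem_oddComps_iff.1 hKD
        have hne : K ≠ C := fun h => (Nat.not_even_iff_odd.2 hKodd) (h ▸ hCodd)
        obtain ⟨x, hx⟩ := comps_nonempty hKc
        exact (Finset.disjoint_left.1 (comps_disjoint hKc hC hne) hx)
          (Finset.mem_of_mem_erase (hKsub hx))
      have hbig : qq G (A \ S') ≥ S.card + 1 := by
        rw [hD']
        have hsub2 : insert K (oddComps G D) ⊆ oddComps G (D.erase v) := by
          intro X hX
          rcases Finset.mem_insert.1 hX with rfl | hX
          · exact hK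
          · exact htransfer X hX
        calc S.card + 1 = (insert K (oddComps G D)).card := by
              rw [Finset.card_insert_of_notMem hKC,
                show (oddComps G D).card = qq G D from rfl, hSq]
          _ ≤ _ := Finset.card_le_card hsub2
      have := ht S' hS'sub
      have hS'𝒮 : S' ∈ 𝒮 := by
        simp only [h𝒮, Finset.mem_filter, Finset.mem_powerset]
        exact ⟨hS'sub, le_antisymm (ht S' hS'sub) (by omega)⟩
      have := hmax S' hS'𝒮
      omega
    -- Claim 2: criticality
    have hcrit : ∀ C0 ∈ comps G D, ∀ v0 ∈ C0, TutteCond G (C0.erase v0) := by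
      intro C hC v hvC T hT
      by_contra hcon
      push_neg at hcon
      set X : Finset V := C.erase v \ T with hX
      have hCodd : Odd C.card := hodd C hC
      have hvD : v ∈ D := comps_subset hC hvC
      -- parity: qq G X ≡ T.card, so qq G X ≥ T.card + 2
      have hX2 : qq G X ≥ T.card + 2 := by
        have hpar : ((qq G X : ZMod 2)) = (T.card : ZMod 2) := by
          rw [← qq_parity]
          have hcard : X.card = C.card - 1 - T.card := by
            rw [hX, Finset.card_sdiff_of_subset hT, Finset.card_erase_of_mem hvC]
          have h1 : 0 < C.card := Finset.card_pos.2 ⟨v, hvC⟩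
          have h2 : T.card ≤ C.card - 1 := by
            have := Finset.card_le_card hT
            rwa [Finset.card_erase_of_mem hvC] at this
          have h3 := hCodd
          rw [Nat.odd_iff] at h3
          have : (X.card + T.card) % 2 = 0 := by omega
          have hcast : ((X.card + T.card : ℕ) : ZMod 2) = 0 := by
            rw [← ZMod.natCast_mod, this]; rfl
          push_cast at hcast
          have h2z : (2 : ZMod 2) = 0 := rfl
          linear_combination hcast - (T.card : ZMod 2) * h2z
        rcases Nat.lt_or_ge (qq G X) (T.card + 2) with h | h
        · exfalso
          have : qq G X = T.card + 1 := by omega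
          rw [this] at hpar
          push_cast at hpar
          have : (1 : ZMod 2) = 0 := by linear_combination hpar
          exact one_ne_zero this
        · exact h
      -- the bigger deleted set
      set S'' : Finset V := S ∪ insert v T with hS''
      have hTD : T ⊆ D := fun x hx =>
        comps_subset hC (Finset.mem_of_mem_erase (hT hx))
      have hTC : T ⊆ C := fun x hx => Finset.mem_of_mem_erase (hT hx)
      have hvT : v ∉ T := fun h => (Finset.mem_erase.1 (hT h)).1 rfl
      have hS''sub : S'' ⊆ A := by
        rw [hS'']
        exact Finset.union_subset hSsub
          (Finset.insert_subset (hDA hvD) (fun x hx => hDA (hTD hx)))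
      have hS''card : S''.card = S.card + T.card + 1 := by
        rw [hS'', Finset.card_union_of_disjoint, Finset.card_insert_of_notMem hvT]
        · ring
        · rw [Finset.disjoint_right]
          intro x hx
          rcases Finset.mem_insert.1 hx with hxv | hxT
          · exact hxv ▸ hDS v hvD
          · exact hDS x (hTD hxT)
      have hD'' : A \ S'' = D \ insert v T := by
        ext w
        simp only [hS'', hD, Finset.mem_sdiff, Finset.mem_union, Finset.mem_insert]
        tauto
      -- transfers into D \ insert v T
      have hXsub : X ⊆ D \ insert v T := by
        intro x hx
        obtain ⟨hx1, hx2⟩ := Finset.mem_sdiff.1 hx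
        obtain ⟨hxv, hxC⟩ := Finset.mem_erase.1 hx1
        refine Finset.mem_sdiff.2 ⟨comps_subset hC hxC, ?_⟩
        simp only [Finset.mem_insert]
        tauto
      have htrans1 : ∀ C₁ ∈ oddComps G D, C₁ ≠ C → C₁ ∈ oddComps G (D \ insert v T) := by
        intro C₁ hC₁ hne
        obtain ⟨hC₁c, hC₁odd⟩ := mem_oddComps_iff.1 hC₁
        have hdisj : Disjoint C₁ C := comps_disjoint hC₁c hC hne
        refine mem_oddComps_iff.2 ⟨mem_comps_transfer hC₁c ?_ ?_, hC₁odd⟩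
        · intro w hw
          refine Finset.mem_sdiff.2 ⟨comps_subset hC₁c hw, ?_⟩
          simp only [Finset.mem_insert]
          rintro (rfl | hwT)
          · exact (Finset.disjoint_left.1 hdisj hw) hvC
          · exact (Finset.disjoint_left.1 hdisj hw) (hTC hwT)
        · intro a ha b hb hab
          exact adj_mem_comp hC₁c ha (Finset.mem_sdiff.1 hb).1 hab
      have htrans2 : ∀ K ∈ oddComps G X, K ∈ oddComps G (D \ insert v T) := by
        intro K hK
        obtain ⟨hKc, hKodd⟩ := mem_oddComps_iff.1 hK
        refine mem_oddComps_iff.2 ⟨mem_comps_transfer hKc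
          (fun x hx => hXsub (comps_subset hKc hx)) ?_, hKodd⟩
        intro a ha b hb hab
        have haC : a ∈ C := Finset.mem_of_mem_erase
          ((Finset.mem_sdiff.1 (comps_subset hKc ha)).1)
        have hbD : b ∈ D := (Finset.mem_sdiff.1 hb).1
        have hbC : b ∈ C := adj_mem_comp hC haC hbD hab
        have hbX : b ∈ X := by
          have := (Finset.mem_sdiff.1 hb).2
          simp only [Finset.mem_insert] at this
          push_neg at this
          exact Finset.mem_sdiff.2 ⟨Finset.mem_erase.2 ⟨this.1, hbC⟩, this.2⟩
        exact adj_mem_comp hKc ha hbX hab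
      -- counting
      have hbig : qq G (A \ S'') ≥ S''.card := by
        rw [hD'']
        have h1 : (oddComps G D).erase C ⊆ oddComps G (D \ insert v T) := by
          intro C₁ hC₁
          exact htrans1 C₁ (Finset.mem_of_mem_erase hC₁) (Finset.mem_erase.1 hC₁).1
        have h2 : oddComps G X ⊆ oddComps G (D \ insert v T) := htrans2
        have hdisj : Disjoint ((oddComps G D).erase C) (oddComps G X) := by
          rw [Finset.disjoint_right]
          intro K hK hK'
          obtain ⟨hKc, hKodd⟩ := mem_oddComps_iff.1 hK
          obtain ⟨hKne, hKD⟩ := Finset.mem_erase.1 hK'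
          obtain ⟨x, hx⟩ := comps_nonempty hKc
          have hxC : x ∈ C := Finset.mem_of_mem_erase
            ((Finset.mem_sdiff.1 (comps_subset hKc hx)).1)
          have hKDc := (mem_oddComps_iff.1 hKD).1
          exact (Finset.disjoint_left.1 (comps_disjoint hKDc hC hKne) hx) hxC
        have hCodd' : C ∈ oddComps G D := mem_oddComps_iff.2 ⟨hC, hCodd⟩
        have := two_families_card_le h1 h2 hdisj
        rw [Finset.card_erase_of_mem hCodd'] at this
        have hq : (oddComps G D).card = S.card := hSq
        have hfq : (oddComps G X).card = qq G X := rfl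
        omega
      have hS''𝒮 : S'' ∈ 𝒮 := by
        simp only [h𝒮, Finset.mem_filter, Finset.mem_powerset]
        exact ⟨hS''sub, le_antisymm (ht S'' hS''sub) hbig⟩
      have := hmax S'' hS''𝒮
      omega
    -- all components are odd, and there are exactly S.card of them
    have hcompsodd : oddComps G D = comps G D :=
      Finset.filter_true_of_mem hodd
    have hk : (comps G D).card = S.card := by
      rw [← hcompsodd]; exact hSq
    -- Hall's condition
    have hall : ∀ (s : Finset {C : Finset V // C ∈ comps G D}),
        s.card ≤ (s.biUnion fun C => S.filter (fun x => ∃ u ∈ C.1, G.Adj u x)).card := by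
      intro s
      set W : Finset (Finset V) := s.image (fun C => C.1) with hW
      have hWcard : W.card = s.card :=
        Finset.card_image_of_injective _ Subtype.val_injective
      set S₀ : Finset V := s.biUnion (fun C => S.filter (fun x => ∃ u ∈ C.1, G.Adj u x))
        with hS₀
      have hS₀S : S₀ ⊆ S := by
        intro x hx
        obtain ⟨C, _, hxC⟩ := Finset.mem_biUnion.1 hx
        exact Finset.mem_of_mem_filter x hxC
      have hS₀A : S₀ ⊆ A := hS₀S.trans hSsub
      have hWodd : W ⊆ oddComps G (A \ S₀) := by
        intro C hCW
        obtain ⟨c, hcs, rfl⟩ := Finset.mem_image.1 hCW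
        have hCc : c.1 ∈ comps G D := c.2
        refine mem_oddComps_iff.2 ⟨mem_comps_transfer hCc ?_ ?_, hodd _ hCc⟩
        · intro w hw
          exact Finset.mem_sdiff.2 ⟨hDA (comps_subset hCc hw),
            fun hwS₀ => hDS w (comps_subset hCc hw) (hS₀S hwS₀)⟩
        · intro a ha b hb hab
          obtain ⟨hbA, hbS₀⟩ := Finset.mem_sdiff.1 hb
          by_cases hbD : b ∈ D
          · exact adj_mem_comp hCc ha hbD hab
          · exfalso
            have hbS : b ∈ S := by
              by_contra hbS
              exact hbD (hAD b hbA hbS)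
            exact hbS₀ (Finset.mem_biUnion.2 ⟨c, hcs,
              Finset.mem_filter.2 ⟨hbS, a, ha, hab⟩⟩)
      calc s.card = W.card := hWcard.symm
        _ ≤ (oddComps G (A \ S₀)).card := Finset.card_le_card hWodd
        _ ≤ S₀.card := ht S₀ hS₀A
    obtain ⟨f, hfinj, hfmem⟩ :=
      (Finset.all_card_le_biUnion_card_iff_exists_injective
        (fun C : {C : Finset V // C ∈ comps G D} =>
          S.filter (fun x => ∃ u ∈ C.1, G.Adj u x))).1 hall
    have hfS : ∀ C, f C ∈ S := fun C => Finset.mem_of_mem_filter _ (hfmem C)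
    have hfadj : ∀ C, ∃ u ∈ C.1, G.Adj u (f C) :=
      fun C => (Finset.mem_filter.1 (hfmem C)).2
    -- f is surjective onto S
    have himage : Finset.univ.image f = S := by
      apply Finset.eq_of_subset_of_card_le
      · intro x hx
        obtain ⟨C, _, rfl⟩ := Finset.mem_image.1 hx
        exact hfS C
      · rw [Finset.card_image_of_injective _ hfinj, Finset.card_univ, Fintype.card_coe, hk]
    have hsurj : ∀ v ∈ S, ∃ C, f C = v := by
      intro v hv
      rw [← himage] at hv
      obtain ⟨C, _, hC⟩ := Finset.mem_image.1 hv
      exact ⟨C, hC⟩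
    -- choose the attachment vertices and the matchings inside components
    choose uC huC1 huC2 using hfadj
    have hIH : ∀ C : {C : Finset V // C ∈ comps G D},
        ∃ m, IsPMOn G (C.1.erase (uC C)) m := by
      intro C
      apply ih
      · have h1 : C.1.card ≤ A.card :=
          Finset.card_le_card ((comps_subset C.2).trans hDA)
        have h2 : 0 < C.1.card := Finset.card_pos.2 ⟨uC C, huC1 C⟩
        rw [Finset.card_erase_of_mem (huC1 C)]
        omega
      · exact hcrit C.1 C.2 (uC C) (huC1 C)
    choose g hg using hIH
    -- assemble the global matching
    refine ⟨fun v => if hv : v ∈ D then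
        (if v = uC ⟨comp G D v, comp_mem_comps hv⟩ then f ⟨comp G D v, comp_mem_comps hv⟩
         else g ⟨comp G D v, comp_mem_comps hv⟩ v)
      else if h : ∃ C, f C = v then uC h.choose else v, ?_⟩
    intro v hvA
    by_cases hvD : v ∈ D
    · set C : {C : Finset V // C ∈ comps G D} := ⟨comp G D v, comp_mem_comps hvD⟩ with hCdef
      have hvC : v ∈ C.1 := mem_comp_self hvD
      simp only [dif_pos hvD]
      by_cases hvu : v = uC C
      · simp only [← hCdef, if_pos hvu]
        have hfCS : f C ∈ S := hfS C
        have hfCD : f C ∉ D := fun h => hDS _ h hfCS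
        refine ⟨hSsub hfCS, fun h => hDS v hvD (h ▸ hfCS), ?_, ?_⟩
        · have := huC2 C
          rw [← hvu] at this
          exact this
        · have hex : ∃ C', f C' = f C := ⟨C, rfl⟩
          rw [dif_neg hfCD, dif_pos hex]
          have hch : hex.choose = C := hfinj hex.choose_spec
          rw [hch, ← hvu]
      · simp only [← hCdef, if_neg hvu]
        have hvmem : v ∈ C.1.erase (uC C) := Finset.mem_erase.2 ⟨hvu, hvC⟩
        obtain ⟨h1, h2, h3, h4⟩ := hg C v hvmem
        have hwC : g C v ∈ C.1 := Finset.mem_of_mem_erase h1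
        have hwD : g C v ∈ D := comps_subset C.2 hwC
        refine ⟨hDA hwD, h2, h3, ?_⟩
        simp only [dif_pos hwD]
        have hCw : (⟨comp G D (g C v), comp_mem_comps hwD⟩ :
            {C : Finset V // C ∈ comps G D}) = C :=
          Subtype.ext (comp_eq_of_mem_comps C.2 hwC).symm
        rw [hCw, if_neg (Finset.mem_erase.1 h1).1]
        exact h4
    · have hvS : v ∈ S := by
        by_contra hvS
        exact hvD (hAD v hvA hvS)
      have hex : ∃ C, f C = v := hsurj v hvS
      simp only [dif_neg hvD, dif_pos hex]
      set C₀ := hex.choose with hC₀def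
      have hfC₀ : f C₀ = v := hex.choose_spec
      have huD : uC C₀ ∈ D := comps_subset C₀.2 (huC1 C₀)
      refine ⟨hDA huD, fun h => hDS _ (h ▸ huD) hvS, ?_, ?_⟩
      · have := huC2 C₀
        rw [hfC₀] at this
        exact this.symm
      · simp only [← hC₀def, dif_pos huD]
        have hCw : (⟨comp G D (uC C₀), comp_mem_comps huD⟩ :
            {C : Finset V // C ∈ comps G D}) = C₀ :=
          Subtype.ext (comp_eq_of_mem_comps C₀.2 (huC1 C₀)).symm
        rw [hCw, if_pos rfl]
        exact hfC₀

/-! ### Multigraph part -/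

/-- `(n : ZMod 2) = 1 ↔ n` is odd. -/
lemma zmod_two_eq_one_iff {n : ℕ} : (n : ZMod 2) = 1 ↔ Odd n := by
  rw [Nat.odd_iff, ← ZMod.natCast_mod n 2]
  rcases Nat.mod_two_eq_zero_or_one n with h | h <;> rw [h] <;> decide

lemma zmod_two_eq_zero_iff {n : ℕ} : (n : ZMod 2) = 0 ↔ n % 2 = 0 := by
  rw [← ZMod.natCast_mod n 2]
  rcases Nat.mod_two_eq_zero_or_one n with h | h <;> rw [h] <;> decide

end PM

namespace MG

open PM

variable (G : Multigraph)

/-- The simple graph underlying a multigraph. -/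
noncomputable def mSimple : SimpleGraph G.V where
  Adj u v := u ≠ v ∧ ∃ e, G.ends e = s(u, v)
  symm := ⟨by
    rintro u v ⟨h, e, he⟩
    exact ⟨h.symm, e, by rwa [Sym2.eq_swap]⟩⟩
  loopless := ⟨fun v h => h.1 rfl⟩

/-- The number of endpoints of `e` lying in `C`. -/
noncomputable def tC (C : Finset G.V) (e : G.E) : ℕ :=
  (C.filter (fun v => v ∈ G.ends e)).card

/-- The edge boundary of a vertex set `C`: edges with exactly one endpoint in `C`. -/
noncomputable def bdry (C : Finset G.V) : Finset G.E :=
  Finset.univ.filter (fun e => tC G C e = 1)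

variable {G}

lemma ends_decomp (hl : G.Loopless) (e : G.E) :
    ∃ a b : G.V, a ≠ b ∧ G.ends e = s(a, b) := by
  obtain ⟨⟨a, b⟩, h⟩ := Quot.exists_rep (G.ends e)
  refine ⟨a, b, ?_, h.symm⟩
  rintro rfl
  exact hl e (h ▸ Sym2.mk_isDiag_iff.2 rfl)

lemma incCount_eq (hl : G.Loopless) (v : G.V) (e : G.E) :
    G.incCount v e = if v ∈ G.ends e then 1 else 0 := by
  unfold Multigraph.incCount
  rw [if_neg]
  intro h
  exact hl e (h ▸ Sym2.diag_isDiag v)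

lemma tC_eq (hl : G.Loopless) {C : Finset G.V} {e : G.E} {a b : G.V} (hne : a ≠ b)
    (he : G.ends e = s(a, b)) :
    tC G C e = (if a ∈ C then 1 else 0) + (if b ∈ C then 1 else 0) := by
  unfold tC
  have : C.filter (fun v => v ∈ G.ends e) =
      C.filter (fun v => v = a) ∪ C.filter (fun v => v = b) := by
    rw [← Finset.filter_or]
    apply Finset.filter_congr
    intro x _
    simp [he, Sym2.mem_iff]
  rw [this, Finset.card_union_of_disjoint, Finset.filter_eq', Finset.filter_eq']
  · split <;> split <;> simp
  · simp only [Finset.disjoint_left, Finset.mem_filter]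
    rintro x ⟨_, rfl⟩ ⟨_, rfl⟩
    exact hne rfl

lemma tC_le_two (hl : G.Loopless) (C : Finset G.V) (e : G.E) : tC G C e ≤ 2 := by
  obtain ⟨a, b, hne, he⟩ := ends_decomp hl e
  rw [tC_eq hl hne he]
  split <;> split <;> omega

lemma sum_deg_eq (hl : G.Loopless) (C : Finset G.V) :
    ∑ v ∈ C, G.degree v = ∑ e : G.E, tC G C e := by
  unfold Multigraph.degree
  rw [Finset.sum_comm]
  apply Finset.sum_congr rfl
  intro e _
  rw [show tC G C e = _ from Finset.card_filter _ _]
  apply Finset.sum_congr rfl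
  intro v _
  exact incCount_eq hl v e

lemma sum_deg_cubic (hG : G.Cubic) (C : Finset G.V) :
    ∑ e : G.E, tC G C e = 3 * C.card := by
  rw [← sum_deg_eq hG.1]
  rw [Finset.sum_congr rfl (fun v _ => hG.2 v)]
  simp [mul_comm]

/-- Parity of the boundary. -/
lemma bdry_parity (hG : G.Cubic) (C : Finset G.V) :
    ((bdry G C).card : ZMod 2) = (C.card : ZMod 2) := by
  have h1 : ((3 * C.card : ℕ) : ZMod 2) = ((bdry G C).card : ZMod 2) := by
    rw [← sum_deg_cubic hG C]
    push_cast
    rw [show ((bdry G C).card : ZMod 2) = ∑ e : G.E, if tC G C e = 1 then (1 : ZMod 2) else 0 by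
      rw [← Finset.sum_filter]
      simp [bdry]]
    apply Finset.sum_congr rfl
    intro e _
    have h2 := tC_le_two hG.1 C e
    interval_cases h : tC G C e <;> simp_all <;> decide
  rw [← h1]
  push_cast
  have h2z : (2 : ZMod 2) = 0 := rfl
  linear_combination (C.card : ZMod 2) * h2z

lemma card_V_even (hG : G.Cubic) : ((Finset.univ : Finset G.V).card : ZMod 2) = 0 := by
  have h1 : ∑ e : G.E, tC G (Finset.univ : Finset G.V) e = 2 * (Finset.univ : Finset G.E).card := by
    have h0 : ∀ e ∈ (Finset.univ : Finset G.E), tC G Finset.univ e = 2 := by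
      intro e _
      obtain ⟨a, b, hne, he⟩ := ends_decomp hG.1 e
      rw [tC_eq hG.1 hne he]
      simp
    rw [Finset.sum_congr rfl h0]
    simp [mul_comm]
  have h2 := sum_deg_cubic hG (Finset.univ : Finset G.V)
  rw [h1] at h2
  rw [zmod_two_eq_zero_iff]
  omega

lemma star_card (hG : G.Cubic) (s : G.V) :
    (Finset.univ.filter (fun e => s ∈ G.ends e)).card = 3 := by
  have h := hG.2 s
  unfold Multigraph.degree at h
  rw [← h, Finset.card_filter]
  apply Finset.sum_congr rfl
  intro e _
  exact (incCount_eq hG.1 s e).symm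

lemma bdry_mem (hl : G.Loopless) {C : Finset G.V} {e : G.E} (he : e ∈ bdry G C) :
    ∃ a b : G.V, a ≠ b ∧ G.ends e = s(a, b) ∧ a ∈ C ∧ b ∉ C := by
  obtain ⟨a, b, hne, hends⟩ := ends_decomp hl e
  have ht : tC G C e = 1 := (Finset.mem_filter.1 he).2
  rw [tC_eq hl hne hends] at ht
  by_cases ha : a ∈ C <;> by_cases hb : b ∈ C
  · simp [ha, hb] at ht
  · exact ⟨a, b, hne, hends, ha, hb⟩
  · exact ⟨b, a, hne.symm, hends.trans (Sym2.eq_swap), hb, ha⟩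
  · simp [ha, hb] at ht

lemma mem_bdry (hl : G.Loopless) {C : Finset G.V} {e : G.E} {a b : G.V}
    (hends : G.ends e = s(a, b)) (ha : a ∈ C) (hb : b ∉ C) : e ∈ bdry G C := by
  have hne : a ≠ b := fun h => hb (h ▸ ha)
  refine Finset.mem_filter.2 ⟨Finset.mem_univ e, ?_⟩
  rw [tC_eq hl hne hends, if_pos ha, if_neg hb]

/-- If the boundary of `C` is a single edge, that edge is a bridge. -/
lemma isBridge_of_bdry_singleton (hl : G.Loopless) {C : Finset G.V} {e : G.E}
    (hb : bdry G C = {e}) : G.IsBridge e := by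
  obtain ⟨a, b, hne, hends, haC, hbC⟩ := bdry_mem hl (hb ▸ Finset.mem_singleton_self e)
  have hconf : ∀ x : G.V, G.Reach {e' | e' ≠ e} a x → x ∈ C := by
    intro x hx
    induction hx with
    | refl => exact haC
    | tail h step ih =>
      rename_i y z
      obtain ⟨e', he', hee'⟩ := step
      by_contra hzC
      have : e' ∈ bdry G C := mem_bdry hl hee' ih hzC
      rw [hb, Finset.mem_singleton] at this
      exact he' this
  have hreach_ab : ¬ G.Reach {e' | e' ≠ e} a b := fun h => hbC (hconf b h)
  have hsymm : ∀ u w : G.V, G.Reach {e' | e' ≠ e} u w → G.Reach {e' | e' ≠ e} w u := by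
    intro u w h
    refine (@Relation.ReflTransGen.stdSymm _ _ ⟨?_⟩).symm _ _ h
    rintro x y ⟨e', he', hee'⟩
    exact ⟨e', he', hee'.trans (Sym2.eq_swap)⟩
  intro u w huw hre
  rw [hends, Sym2.eq_iff] at huw
  rcases huw with ⟨rfl, rfl⟩ | ⟨rfl, rfl⟩
  · exact hreach_ab hre
  · exact hreach_ab (hsymm _ _ hre)

lemma mSimple_adj {u v : G.V} : (mSimple G).Adj u v ↔ u ≠ v ∧ ∃ e, G.ends e = s(u, v) :=
  Iff.rfl

set_option maxHeartbeats 1000000 in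
/-- The Tutte condition for a cubic multigraph with at most two bridges. -/
lemma tutteCond_of_cubic (hG : G.Cubic) (hbr : {e : G.E | G.IsBridge e}.ncard ≤ 2) :
    TutteCond (mSimple G) (Finset.univ : Finset G.V) := by
  intro S hS
  set H := mSimple G with hH
  set D : Finset G.V := Finset.univ \ S with hD
  have hDS : ∀ v ∈ D, v ∉ S := fun v hv => (Finset.mem_sdiff.1 hv).2
  have hSD : ∀ v : G.V, v ∉ D → v ∈ S := by
    intro v hv
    by_contra hvS
    exact hv (Finset.mem_sdiff.2 ⟨Finset.mem_univ v, hvS⟩)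
  -- boundary edges of components go to S
  have hbd : ∀ C ∈ comps H D, ∀ e ∈ bdry G C,
      ∃ a b : G.V, a ≠ b ∧ G.ends e = s(a, b) ∧ a ∈ C ∧ b ∈ S := by
    intro C hC e he
    obtain ⟨a, b, hne, hends, haC, hbC⟩ := bdry_mem hG.1 he
    refine ⟨a, b, hne, hends, haC, ?_⟩
    by_contra hbS
    have hbD : b ∈ D := Finset.mem_sdiff.2 ⟨Finset.mem_univ b, hbS⟩
    exact hbC (adj_mem_comp hC haC hbD (mSimple_adj.2 ⟨hne, e, hends⟩))
  -- boundaries of distinct components are disjoint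
  have hdisj : ∀ C ∈ comps H D, ∀ C' ∈ comps H D, C ≠ C' →
      Disjoint (bdry G C) (bdry G C') := by
    intro C hC C' hC' hne
    rw [Finset.disjoint_left]
    intro e heC heC'
    obtain ⟨a, b, hab, hends, haC, hbS⟩ := hbd C hC e heC
    obtain ⟨a', b', hab', hends', haC', hbS'⟩ := hbd C' hC' e heC'
    have ha' : a' = a ∨ a' = b := by
      have h1 : a' ∈ G.ends e := by rw [hends']; simp
      rw [hends] at h1
      simpa using h1
    rcases ha' with rfl | rfl
    · exact (Finset.disjoint_left.1 (comps_disjoint hC hC' hne) haC) haC'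
    · exact hDS a' (comps_subset hC' haC') hbS
  -- each odd component has an odd boundary
  have hoddb : ∀ C ∈ oddComps H D, Odd (bdry G C).card := by
    intro C hC
    have h1 := bdry_parity hG C
    have h2 : Odd C.card := (mem_oddComps_iff.1 hC).2
    rw [← zmod_two_eq_one_iff, h1]
    exact zmod_two_eq_one_iff.2 h2
  -- the components with a single boundary edge
  set B1 : Finset (Finset G.V) := (oddComps H D).filter (fun C => (bdry G C).card = 1)
    with hB1def
  have hB1comps : ∀ C ∈ B1, C ∈ comps H D :=
    fun C hC => (mem_oddComps_iff.1 (Finset.mem_filter.1 hC).1).1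
  have hB1le : B1.card ≤ 2 := by
    have hbr' : {e : G.E | G.IsBridge e}.ncard =
        (Finset.univ.filter (fun e => G.IsBridge e)).card := by
      rw [Set.ncard_eq_toFinset_card']
      congr 1
      ext e
      simp
    have hsing : ∀ C ∈ B1, ∀ e ∈ bdry G C, bdry G C = {e} := by
      intro C hC e he
      obtain ⟨a, ha⟩ := Finset.card_eq_one.1 (Finset.mem_filter.1 hC).2
      rw [ha] at he ⊢
      rw [Finset.mem_singleton.1 he]
    have hsub1 : B1.biUnion (fun C => bdry G C) ⊆
        Finset.univ.filter (fun e => G.IsBridge e) := by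
      intro e he
      obtain ⟨C, hC, heC⟩ := Finset.mem_biUnion.1 he
      exact Finset.mem_filter.2 ⟨Finset.mem_univ _,
        isBridge_of_bdry_singleton hG.1 (hsing C hC e heC)⟩
    have h1 : (B1.biUnion (fun C => bdry G C)).card = B1.card := by
      rw [Finset.card_biUnion (fun C hC C' hC' hne =>
        hdisj C (hB1comps C hC) C' (hB1comps C' hC') hne)]
      rw [Finset.sum_congr rfl (fun C hC => (Finset.mem_filter.1 hC).2)]
      simp [hB1def]
    have h2 := Finset.card_le_card hsub1
    rw [hbr'] at hbr
    omega
  -- upper bound on the total boundary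
  have hsum_le : ∑ C ∈ oddComps H D, (bdry G C).card ≤ 3 * S.card := by
    rw [← Finset.card_biUnion (fun C hC C' hC' hne => hdisj C
      (mem_oddComps_iff.1 hC).1 C' (mem_oddComps_iff.1 hC').1 hne)]
    have hsub : (oddComps H D).biUnion (fun C => bdry G C) ⊆
        S.biUnion (fun s => Finset.univ.filter (fun e => s ∈ G.ends e)) := by
      intro e he
      obtain ⟨C, hC, heC⟩ := Finset.mem_biUnion.1 he
      obtain ⟨a, b, hne, hends, haC, hbS⟩ := hbd C (mem_oddComps_iff.1 hC).1 e heC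
      refine Finset.mem_biUnion.2 ⟨b, hbS, Finset.mem_filter.2 ⟨Finset.mem_univ e, ?_⟩⟩
      rw [hends]
      simp
    calc ((oddComps H D).biUnion (fun C => bdry G C)).card
        ≤ (S.biUnion (fun s => Finset.univ.filter (fun e => s ∈ G.ends e))).card :=
          Finset.card_le_card hsub
      _ ≤ ∑ s ∈ S, (Finset.univ.filter (fun e => s ∈ G.ends e)).card :=
          Finset.card_biUnion_le
      _ = 3 * S.card := by
          rw [Finset.sum_congr rfl (fun s _ => star_card hG s)]
          simp [mul_comm]
  -- lower bound on the total boundary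
  have hsum_ge : 3 * qq H D ≤ (∑ C ∈ oddComps H D, (bdry G C).card) + 2 * B1.card := by
    rw [← Finset.sum_filter_add_sum_filter_not (oddComps H D)
      (fun C => (bdry G C).card = 1)]
    have hs1 : ∑ C ∈ B1, (bdry G C).card = B1.card := by
      rw [Finset.sum_congr rfl (fun C hC => (Finset.mem_filter.1 hC).2)]
      simp [hB1def]
    have hs2 : ∀ C ∈ (oddComps H D).filter (fun C => ¬ (bdry G C).card = 1),
        3 ≤ (bdry G C).card := by
      intro C hC
      obtain ⟨hC1, hC2⟩ := Finset.mem_filter.1 hC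
      have := hoddb C hC1
      rw [Nat.odd_iff] at this
      omega
    have hs3 : ((oddComps H D).filter (fun C => ¬ (bdry G C).card = 1)).card * 3 ≤
        ∑ C ∈ (oddComps H D).filter (fun C => ¬ (bdry G C).card = 1), (bdry G C).card := by
      rw [show ((oddComps H D).filter (fun C => ¬ (bdry G C).card = 1)).card * 3 =
        ∑ _C ∈ (oddComps H D).filter (fun C => ¬ (bdry G C).card = 1), 3 by simp [mul_comm]]
      exact Finset.sum_le_sum hs2
    have hs4 : B1.card + ((oddComps H D).filter (fun C => ¬ (bdry G C).card = 1)).card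
        = qq H D := by
      rw [hB1def]
      exact Finset.card_filter_add_card_filter_not _
    rw [← hB1def, hs1]
    omega
  -- parity
  have hpar : ((qq H D : ZMod 2)) + (S.card : ZMod 2) = 0 := by
    have h1 := qq_parity (G := H) D
    have h2 : D.card + S.card = (Finset.univ : Finset G.V).card := by
      rw [hD]
      exact Finset.card_sdiff_add_card_eq_card hS
    have h3 := card_V_even hG
    calc ((qq H D : ZMod 2)) + (S.card : ZMod 2)
        = ((D.card : ℕ) : ZMod 2) + (S.card : ZMod 2) := by rw [h1]
      _ = (((D.card + S.card : ℕ)) : ZMod 2) := by push_cast; ring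
      _ = 0 := by rw [h2, h3]
  -- conclude
  by_contra hcon
  push_neg at hcon
  have hq1 : qq H D = S.card + 1 := by omega
  rw [hq1] at hpar
  push_cast at hpar
  have h2z : (2 : ZMod 2) = 0 := rfl
  have : (1 : ZMod 2) = 0 := by linear_combination hpar - (S.card : ZMod 2) * h2z
  exact one_ne_zero this

end MG


/-- A cubic graph with at most two bridges has a perfect matching. -/
theorem cubic_at_most_two_bridges_has_perfect_matching (G : Multigraph)
    (hG : G.Cubic) (hbr : {e : G.E | G.IsBridge e}.ncard ≤ 2) :
    ∃ M : Set G.E, G.IsPerfectMatching M := by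
  classical
  obtain ⟨m, hm⟩ := PM.tutte (G := MG.mSimple G) (Finset.univ : Finset G.V).card
    Finset.univ le_rfl (MG.tutteCond_of_cubic hG hbr)
  -- facts about the matching involution
  have hm' : ∀ v : G.V, m v ≠ v ∧ (∃ e, G.ends e = s(v, m v)) ∧ m (m v) = v := by
    intro v
    obtain ⟨_, h2, h3, h4⟩ := hm v (Finset.mem_univ v)
    exact ⟨h2, (MG.mSimple_adj.1 h3).2, h4⟩
  -- edge selector
  set sel : Sym2 G.V → Option G.E := fun p =>
    if h : ∃ e, G.ends e = p then some h.choose else none with hsel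
  have hsel1 : ∀ p e, sel p = some e → G.ends e = p := by
    intro p e h
    rw [hsel] at h
    simp only at h
    split at h
    · rename_i h'
      cases h
      exact h'.choose_spec
    · cases h
  have hsel2 : ∀ p, (∃ e, G.ends e = p) → ∃ e, sel p = some e := by
    intro p hp
    rw [hsel]
    simp only
    rw [dif_pos hp]
    exact ⟨hp.choose, rfl⟩
  refine ⟨{e | ∃ v : G.V, sel s(v, m v) = some e}, ?_, ?_⟩
  · -- it is a matching
    intro e he e' he' hne hcom
    obtain ⟨w, hw, hw'⟩ := hcom
    obtain ⟨v, hv⟩ := he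
    obtain ⟨u, hu⟩ := he'
    have hev : G.ends e = s(v, m v) := hsel1 _ _ hv
    have heu : G.ends e' = s(u, m u) := hsel1 _ _ hu
    have hkey : s(v, m v) = s(u, m u) := by
      rw [hev, Sym2.mem_iff] at hw
      rw [heu, Sym2.mem_iff] at hw'
      rcases hw with rfl | hwmv
      · rcases hw' with rfl | hwmu
        · rfl
        · -- w = v, v = m u
          rw [hwmu, (hm' u).2.2, Sym2.eq_swap]
      · rcases hw' with rfl | hwmu
        · -- w = u, u = m v
          rw [hwmv, (hm' v).2.2, Sym2.eq_swap]
        · -- m v = w = m u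
          have huv : v = u := by
            have := congrArg m (hwmv.symm.trans hwmu)
            rwa [(hm' v).2.2, (hm' u).2.2] at this
          rw [huv]
    apply hne
    have := hv.symm.trans (hkey ▸ hu)
    exact Option.some_injective _ this
  · -- it is perfect
    intro v
    obtain ⟨hne, hex, hinv⟩ := hm' v
    obtain ⟨e, he⟩ := hsel2 _ hex
    refine ⟨e, ⟨v, he⟩, ?_⟩
    rw [hsel1 _ _ he]
    simp
end

section
/- Suppose G and H are cubic graphs and f is an H-coloring of G. Then for every bridge e of G, the edge f(e) is a bridge of H. -/
open scoped Classical

namespace Multigraph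

variable (X : Multigraph)

/-- Parity (in `ZMod 2`) of the degree of `v` within the finite edge set `B`. -/
noncomputable def par (B : Finset X.E) (v : X.V) : ZMod 2 :=
  ∑ e ∈ B, (X.incCount v e : ZMod 2)

lemma zmod2_add_self : ∀ x : ZMod 2, x + x = 0 := by decide

lemma zmod2_neg : ∀ x : ZMod 2, -x = x := by decide

lemma incCast {e : X.E} {a b : X.V} (h : X.ends e = s(a, b)) (v : X.V) :
    (X.incCount v e : ZMod 2)
      = (if v = a then 1 else 0) + (if v = b then 1 else 0) := by
  unfold incCount
  rw [h]
  by_cases hva : v = a <;> by_cases hvb : v = b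
  · subst hva; subst hvb; simp [Sym2.diag]; decide
  · subst hva
    rw [if_neg (by simp [Sym2.diag, Sym2.eq_iff]; intro h1; exact hvb h1.symm)]
    simp [hvb]
  · subst hvb
    rw [if_neg (by simp [Sym2.diag, Sym2.eq_iff]; intro h1; exact hva h1.symm)]
    simp [hva]
  · rw [if_neg (by simp [Sym2.diag, Sym2.eq_iff]; intro h1 h2; exact hva h1.symm),
      if_neg (by simp [Sym2.mem_iff]; exact ⟨hva, hvb⟩)]
    simp [hva, hvb]

lemma par_insert {B : Finset X.E} {e : X.E} (h : e ∉ B) (v : X.V) :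
    X.par (insert e B) v = X.par B v + X.incCount v e := by
  unfold par; rw [Finset.sum_insert h]; ring

lemma par_erase {B : Finset X.E} {e : X.E} (h : e ∈ B) (v : X.V) :
    X.par (B.erase e) v = X.par B v + X.incCount v e := by
  unfold par
  rw [Finset.sum_erase_eq_sub h, sub_eq_add_neg, zmod2_neg]

lemma reach_to_par {A : Set X.E} {u w : X.V} (h : X.Reach A u w) :
    ∃ B : Finset X.E, ↑B ⊆ A ∧ ∀ v, X.par B v =
      (if v = u then 1 else 0) + (if v = w then 1 else 0) := by
  induction h with
  | refl =>
      exact ⟨∅, by simp, fun v => by simp [par, zmod2_add_self]⟩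
  | @tail b c hub hstep ih =>
      obtain ⟨B, hBA, hBp⟩ := ih
      obtain ⟨e0, he0A, hends⟩ := hstep
      have key : ∀ x y z : ZMod 2, (x + y) + (y + z) = x + z := by decide
      by_cases hmem : e0 ∈ B
      · refine ⟨B.erase e0, fun x hx => hBA (Finset.mem_of_mem_erase hx), fun v => ?_⟩
        rw [X.par_erase hmem, hBp, X.incCast hends]
        exact key _ _ _
      · refine ⟨insert e0 B, ?_, fun v => ?_⟩
        · intro x hx
          rcases Finset.mem_insert.mp hx with h | h
          · exact h ▸ he0A
          · exact hBA h
        · rw [X.par_insert hmem, hBp, X.incCast hends]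
          exact key _ _ _

lemma par_to_reach : ∀ (n : ℕ) (B : Finset X.E), B.card = n → ∀ u w : X.V, u ≠ w →
    (∀ v, X.par B v = (if v = u then 1 else 0) + (if v = w then 1 else 0)) →
    X.Reach ↑B u w := by
  intro n
  induction n using Nat.strong_induction_on with
  | _ n ih =>
    intro B hcard u w huw hpar
    have hu : X.par B u = 1 := by rw [hpar]; simp [huw]
    have hex : ∃ e ∈ B, (X.incCount u e : ZMod 2) ≠ 0 := by
      by_contra hc
      push_neg at hc
      have h0 : X.par B u = 0 := Finset.sum_eq_zero hc
      rw [hu] at h0; exact one_ne_zero h0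
    obtain ⟨e, heB, hinc⟩ := hex
    have hmem : u ∈ X.ends e := by
      by_contra hm
      apply hinc
      unfold incCount
      rw [if_neg (fun hd => hm (by rw [hd]; exact Sym2.mem_mk_left u u)), if_neg hm]
      simp
    obtain ⟨b, hb⟩ := Sym2.mem_iff_exists.mp hmem
    have hbu : b ≠ u := by
      intro h; subst h
      apply hinc
      unfold incCount
      rw [if_pos (by rw [hb]; rfl)]
      decide
    by_cases hbw : b = w
    · subst hbw
      exact Relation.ReflTransGen.single ⟨e, by simpa using heB, hb⟩
    · have hn : 0 < n := by
        rw [← hcard]; exact Finset.card_pos.mpr ⟨e, heB⟩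
      have hcard' : (B.erase e).card = n - 1 := by
        rw [Finset.card_erase_of_mem heB, hcard]
      have key : ∀ x y z : ZMod 2, (x + z) + (x + y) = y + z := by decide
      have hpar' : ∀ v, X.par (B.erase e) v =
          (if v = b then 1 else 0) + (if v = w then 1 else 0) := by
        intro v
        rw [X.par_erase heB, hpar, X.incCast hb]
        exact key _ _ _
      have hreach := ih (n - 1) (Nat.sub_lt hn one_pos) (B.erase e) hcard' b w hbw hpar'
      have hreach' : X.Reach ↑B b w := by
        refine Relation.ReflTransGen.mono ?_ _ _ hreach
        rintro x y ⟨e', he', hE⟩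
        exact ⟨e', Finset.mem_coe.mpr (Finset.mem_of_mem_erase (Finset.mem_coe.mp he')), hE⟩
      exact Relation.ReflTransGen.head ⟨e, by simpa using heB, hb⟩ hreach'

lemma par_eq_card (hL : X.Loopless) (B : Finset X.E) (v : X.V) :
    X.par B v = (((B.filter fun e => v ∈ X.ends e).card : ℕ) : ZMod 2) := by
  unfold par
  rw [Finset.card_filter]
  push_cast
  apply Finset.sum_congr rfl
  intro e _
  unfold incCount
  rw [if_neg (fun hd => hL e (by rw [hd]; exact Sym2.diag_isDiag v))]
  split <;> simp

lemma star_card (h : X.Cubic) (v : X.V) : (X.star v).card = 3 := by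
  have hd := h.2 v
  unfold degree at hd
  rw [← hd]
  unfold star
  rw [Finset.card_filter]
  apply Finset.sum_congr rfl
  intro e _
  unfold incCount
  have hnd : X.ends e ≠ Sym2.diag v := fun hdg => h.1 e (by rw [hdg]; exact Sym2.diag_isDiag v)
  rw [if_neg hnd]

end Multigraph

/-- an H-coloring maps bridges of G to bridges of H. -/
theorem hcoloring_image_of_bridge_is_bridge (G H : Multigraph) (hG : G.Cubic)
    (hH : H.Cubic) (f : G.E → H.E) (hf : Multigraph.IsHColoring G H f)
    (e : G.E) (he : G.IsBridge e) : H.IsBridge (f e) := by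
  intro u w huw hreach
  have huw' : u ≠ w := by
    intro h
    subst h
    exact hH.1 (f e) (by rw [huw]; exact Sym2.mk_isDiag_iff.mpr rfl)
  obtain ⟨B, hBA, hBp⟩ := H.reach_to_par hreach
  have hfe : f e ∉ B := fun h => (hBA h) rfl
  set C := insert (f e) B with hC
  have hCpar : ∀ y, H.par C y = 0 := by
    intro y
    rw [hC, H.par_insert hfe, hBp, H.incCast huw]
    have key : ∀ x y : ZMod 2, (x + y) + (x + y) = 0 := by decide
    exact key _ _
  set D := Finset.univ.filter (fun e' : G.E => f e' ∈ C) with hD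
  have hDpar : ∀ x, G.par D x = 0 := by
    intro x
    obtain ⟨y, hy⟩ := hf x
    have hinj : Set.InjOn f ↑(G.star x) := by
      apply Finset.card_image_iff.mp
      rw [hy, H.star_card hH, G.star_card hG]
    have h2 : D.filter (fun e' => x ∈ G.ends e')
        = (G.star x).filter (fun e' => f e' ∈ C) := by
      ext e'
      simp only [hD, Multigraph.star, Finset.mem_filter, Finset.mem_univ, true_and]
      exact and_comm
    have h3 : ((G.star x).filter (fun e' => f e' ∈ C)).image f
        = (H.star y).filter (fun c => c ∈ C) := by
      ext c
      simp only [Finset.mem_image, Finset.mem_filter]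
      constructor
      · rintro ⟨e', ⟨hs, hc⟩, rfl⟩
        exact ⟨hy ▸ Finset.mem_image_of_mem f hs, hc⟩
      · rintro ⟨hsy, hc⟩
        rw [← hy] at hsy
        obtain ⟨e', hs, rfl⟩ := Finset.mem_image.mp hsy
        exact ⟨e', ⟨hs, hc⟩, rfl⟩
    have h4 : ((G.star x).filter (fun e' => f e' ∈ C)).card
        = ((H.star y).filter (fun c => c ∈ C)).card := by
      rw [← h3]
      exact (Finset.card_image_of_injOn (hinj.mono (by
        intro z hz
        exact Finset.mem_coe.mpr (Finset.mem_of_mem_filter z (Finset.mem_coe.mp hz))))).symm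
    have h5 : (H.star y).filter (fun c => c ∈ C) = C.filter (fun c => y ∈ H.ends c) := by
      ext c
      simp only [Multigraph.star, Finset.mem_filter, Finset.mem_univ, true_and]
      exact and_comm
    rw [G.par_eq_card hG.1, h2, h4, h5, ← H.par_eq_card hH.1]
    exact hCpar y
  have heD : e ∈ D := by
    rw [hD]
    exact Finset.mem_filter.mpr ⟨Finset.mem_univ e, by rw [hC]; exact Finset.mem_insert_self _ _⟩
  obtain ⟨⟨a, b⟩, hab'⟩ := Quot.exists_rep (G.ends e)
  have hab : G.ends e = s(a, b) := hab'.symm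
  have hne : a ≠ b := by
    intro h
    subst h
    exact hG.1 e (by rw [hab]; exact Sym2.mk_isDiag_iff.mpr rfl)
  have hpar' : ∀ v, G.par (D.erase e) v
      = (if v = a then 1 else 0) + (if v = b then 1 else 0) := by
    intro v
    rw [G.par_erase heD, hDpar, G.incCast hab, zero_add]
  have hreachG := G.par_to_reach (D.erase e).card (D.erase e) rfl a b hne hpar'
  apply he a b hab
  refine Relation.ReflTransGen.mono ?_ _ _ hreachG
  rintro x y ⟨e', he', hE⟩
  refine ⟨e', ?_, hE⟩
  exact Finset.ne_of_mem_erase (Finset.mem_coe.mp he')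
end

section
/- Let H be a triangle-free cubic graph and G a cubic graph. If f: E(G) → E(H) is a map such that for any two adjacent edges e, e' of G the edges f(e), f(e') of H are adjacent, then f is an H-coloring of G. -/
open scoped Classical

lemma Sym2.eq_of_mem_mem' {V : Type*} {p : Sym2 V} {a b : V}
    (ha : a ∈ p) (hb : b ∈ p) (h : a ≠ b) : p = s(a, b) := by
  induction p using Sym2.inductionOn with
  | hf x y =>
    rw [Sym2.mem_iff] at ha hb
    obtain rfl | rfl := ha <;> obtain rfl | rfl := hb <;>
      simp_all [Sym2.eq_swap]

lemma Multigraph.star_card_of_cubic (G : Multigraph) (hG : G.Cubic) (x : G.V) :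
    (G.star x).card = 3 := by
  have h := hG.2 x
  rw [Multigraph.degree] at h
  rw [Multigraph.star, Finset.card_filter, ← h]
  apply Finset.sum_congr rfl
  intro e _
  have hne : G.ends e ≠ Sym2.diag x := fun hEq => hG.1 e (hEq ▸ Sym2.diag_isDiag x)
  rw [Multigraph.incCount, if_neg hne]

lemma common_vertex (H : Multigraph) (htf : H.TriangleFree) (a b c : H.E)
    (hab : ∃ v, v ∈ H.ends a ∧ v ∈ H.ends b)
    (hbc : ∃ v, v ∈ H.ends b ∧ v ∈ H.ends c)
    (hac : ∃ v, v ∈ H.ends a ∧ v ∈ H.ends c) :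
    ∃ y, y ∈ H.ends a ∧ y ∈ H.ends b ∧ y ∈ H.ends c := by
  obtain ⟨u, hua, hub⟩ := hab
  obtain ⟨v, hvb, hvc⟩ := hbc
  obtain ⟨w, hwa, hwc⟩ := hac
  by_cases huv : u = v
  · exact ⟨u, hua, hub, huv ▸ hvc⟩
  by_cases huw : u = w
  · exact ⟨u, hua, hub, huw ▸ hwc⟩
  by_cases hvw : v = w
  · exact ⟨v, hvw ▸ hwa, hvb, hvc⟩
  exfalso
  apply htf
  have hb : H.ends b = s(u, v) := Sym2.eq_of_mem_mem' hub hvb huv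
  have hc : H.ends c = s(v, w) := Sym2.eq_of_mem_mem' hvc hwc hvw
  have ha : H.ends a = s(u, w) := Sym2.eq_of_mem_mem' hua hwa huw
  exact ⟨b, c, a, u, v, w, huv, hvw, huw, hb, hc, ha⟩

/-- if H is triangle-free, any adjacency-preserving map
f : E(G) → E(H) is an H-coloring of G. -/
theorem adjacency_preserving_is_hcoloring_of_triangle_free (G H : Multigraph)
    (hG : G.Cubic) (hH : H.Cubic) (htf : H.TriangleFree) (f : G.E → H.E)
    (hadj : ∀ e e' : G.E, G.EdgeAdj e e' → H.EdgeAdj (f e) (f e')) :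
    Multigraph.IsHColoring G H f := by
  intro x
  have hcard : (G.star x).card = 3 := G.star_card_of_cubic hG x
  obtain ⟨e₁, e₂, e₃, h12, h13, h23, hstar⟩ := Finset.card_eq_three.mp hcard
  have hmem : ∀ e ∈ G.star x, x ∈ G.ends e := by
    intro e he
    simpa [Multigraph.star] using he
  have hx1 : x ∈ G.ends e₁ := hmem e₁ (by simp [hstar])
  have hx2 : x ∈ G.ends e₂ := hmem e₂ (by simp [hstar])
  have hx3 : x ∈ G.ends e₃ := hmem e₃ (by simp [hstar])
  have hadj12 := hadj e₁ e₂ ⟨h12, x, hx1, hx2⟩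
  have hadj13 := hadj e₁ e₃ ⟨h13, x, hx1, hx3⟩
  have hadj23 := hadj e₂ e₃ ⟨h23, x, hx2, hx3⟩
  obtain ⟨y, hy1, hy2, hy3⟩ := common_vertex H htf (f e₁) (f e₂) (f e₃)
    hadj12.2 hadj23.2 hadj13.2
  refine ⟨y, ?_⟩
  have hsub : (G.star x).image f ⊆ H.star y := by
    intro e' he'
    obtain ⟨e, he, rfl⟩ := Finset.mem_image.mp he'
    rw [hstar] at he
    simp only [Finset.mem_insert, Finset.mem_singleton] at he
    rcases he with rfl | rfl | rfl <;> simp [Multigraph.star, hy1, hy2, hy3]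
  apply Finset.eq_of_subset_of_card_le hsub
  rw [H.star_card_of_cubic hH y, hstar]
  rw [Finset.image_insert, Finset.image_insert, Finset.image_singleton]
  rw [Finset.card_insert_of_notMem, Finset.card_insert_of_notMem,
    Finset.card_singleton]
  · simp [hadj23.1]
  · simp [hadj12.1, hadj13.1]
end

section
/- Let G be a connected simple cubic graph such that the Sylvester graph S_16 admits a G-coloring (i.e., G ≺ S_16). Then G is isomorphic to S_16. -/
open scoped Classical

namespace Syl16Aux
open Finset Multigraph

lemma sym2_rep {α : Type*} (p : Sym2 α) : ∃ a b, p = s(a, b) :=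
  Sym2.ind (fun a b => ⟨a, b, rfl⟩) p

variable {G : Multigraph}

lemma ends_ne (hl : G.Loopless) (e : G.E) {z z' : G.V} (h : G.ends e = s(z, z')) :
    z ≠ z' := by
  intro hzz; exact hl e (by rw [h, hzz]; exact Sym2.mk_isDiag_iff.mpr rfl)

lemma mem_star_iff {v : G.V} {e : G.E} : e ∈ G.star v ↔ v ∈ G.ends e := by
  simp [Multigraph.star]

lemma star_card (hl : G.Loopless) (hd : G.degree v = 3) : (G.star v).card = 3 := by
  have h1 : G.degree v = (G.star v).card := by
    unfold Multigraph.degree Multigraph.star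
    rw [Finset.card_filter]
    refine Finset.sum_congr rfl fun e _ => ?_
    have h2 : ¬(G.ends e = Sym2.diag v) := fun h => hl e (h ▸ Sym2.diag_isDiag v)
    simp [Multigraph.incCount, h2]
  omega

lemma card_filter_mem_sym2 {α : Type*} [DecidableEq α] (s : Finset α) {p q : α} (hpq : p ≠ q) :
    (s.filter (· ∈ s(p, q))).card
      = (if p ∈ s then 1 else 0) + (if q ∈ s then 1 else 0) := by
  have h1 : s.filter (· ∈ s(p, q)) = s.filter (fun x => x = p ∨ x = q) := by
    refine Finset.filter_congr fun x _ => ?_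
    simp [Sym2.mem_iff]
  rw [h1, Finset.filter_or, Finset.card_union_of_disjoint, Finset.filter_eq', Finset.filter_eq']
  · split <;> split <;> simp
  · rw [Finset.disjoint_filter]
    rintro x _ rfl rfl; exact hpq rfl

end Syl16Aux

namespace Syl16Aux
variable {G : Multigraph}

lemma reach_symm {A : Set G.E} {u v : G.V} (h : G.Reach A u v) : G.Reach A v u := by
  have hsym : Symmetric (fun a b => ∃ e ∈ A, G.ends e = s(a, b)) := by
    rintro a b ⟨e, he, hab⟩; exact ⟨e, he, by rw [hab, Sym2.eq_swap]⟩
  exact @Std.Symm.symm _ _ (@Relation.ReflTransGen.symmetric _ _ ⟨hsym⟩) _ _ h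

lemma reach_invariant {A : Set G.E} {P : G.V → ZMod 2}
    (hP : ∀ e ∈ A, ∀ a b : G.V, G.ends e = s(a, b) → P a = P b)
    {u v : G.V} (h : G.Reach A u v) : P u = P v := by
  induction h with
  | refl => rfl
  | tail _ hstep ih =>
    obtain ⟨e, he, hab⟩ := hstep
    exact ih.trans (hP e he _ _ hab)

/-- Dichotomy: removing one edge `g` with ends `c, w`, every vertex is reachable
from `c` or from `w` avoiding `g`. -/
lemma sides (hconn : G.Connected) {g : G.E} {c w : G.V} (hg : G.ends g = s(c, w)) (z : G.V) :
    G.Reach {e | e ≠ g} c z ∨ G.Reach {e | e ≠ g} w z := by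
  have h := hconn c z
  induction h with
  | refl => exact Or.inl Relation.ReflTransGen.refl
  | tail _ hstep ih =>
    obtain ⟨e, _, hab⟩ := hstep
    rename_i b bb _
    by_cases heg : e = g
    · subst heg
      rw [hg] at hab
      rcases Sym2.eq_iff.mp hab.symm with ⟨h1, h2⟩ | ⟨h1, h2⟩
      · exact Or.inr (by rw [h2]; exact Relation.ReflTransGen.refl)
      · exact Or.inl (by rw [h2]; exact Relation.ReflTransGen.refl)
    · rcases ih with h' | h'
      · exact Or.inl (h'.tail ⟨e, heg, hab⟩)
      · exact Or.inr (h'.tail ⟨e, heg, hab⟩)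

/-- Crossing from the `gj`-side set into reachability avoiding `gi`. -/
lemma cross_block (hl : G.Loopless) {gj gi : G.E} (hne : gi ≠ gj) {c wj wi : G.V}
    (hj : G.ends gj = s(c, wj)) (hi : G.ends gi = s(c, wi))
    (hcj : ¬ G.Reach {e | e ≠ gj} wj c) :
    ∀ z : G.V, G.Reach {e | e ≠ gj} wj z → G.Reach {e | e ≠ gi} c z ∧ z ≠ c := by
  intro z hz
  induction hz with
  | refl =>
    refine ⟨Relation.ReflTransGen.single ⟨gj, fun h => hne h.symm, hj⟩, ?_⟩
    exact (ends_ne hl gj hj).symm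
  | tail hpre hstep ih =>
    rename_i b bb
    obtain ⟨e, he, hab⟩ := hstep
    obtain ⟨ihc, ihnec⟩ := ih
    have hbbc : bb ≠ c := by
      rintro rfl
      exact hcj (hpre.tail ⟨e, he, hab⟩)
    refine ⟨?_, hbbc⟩
    have hegi : e ≠ gi := by
      rintro rfl
      rw [hi] at hab
      rcases Sym2.eq_iff.mp hab with ⟨h1, h2⟩ | ⟨h1, h2⟩
      · exact ihnec h1.symm
      · exact hbbc h1.symm
    exact ihc.tail ⟨e, hegi, hab⟩

end Syl16Aux

namespace Syl16Aux
open Finset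
variable {G : Multigraph}

lemma D_mem_step {g : G.E} {w : G.V} {z z' : G.V} {e : G.E} (heg : e ≠ g)
    (hz : G.Reach {e | e ≠ g} w z) (hee : G.ends e = s(z, z')) :
    G.Reach {e | e ≠ g} w z' :=
  hz.tail ⟨e, heg, hee⟩

lemma D_not_c {g : G.E} {c w : G.V} (hcw : ¬ G.Reach {e | e ≠ g} c w) :
    ¬ G.Reach {e | e ≠ g} w c := fun h => hcw (reach_symm h)

lemma D_odd (hl : G.Loopless) (hd : ∀ v : G.V, G.degree v = 3)
    {g : G.E} {c w : G.V} (hg : G.ends g = s(c, w))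
    (hcw : ¬ G.Reach {e | e ≠ g} c w) :
    Odd (Finset.univ.filter (fun z => G.Reach {e | e ≠ g} w z)).card := by
  classical
  set D := Finset.univ.filter (fun z => G.Reach {e | e ≠ g} w z) with hD
  have hmemD : ∀ z, z ∈ D ↔ G.Reach {e | e ≠ g} w z := by
    intro z; simp [hD]
  have hwD : w ∈ D := (hmemD w).mpr Relation.ReflTransGen.refl
  have hcD : c ∉ D := fun h => D_not_c hcw ((hmemD c).mp h)
  have hsum : ∑ z ∈ D, G.degree z = ∑ e : G.E, (D.filter (· ∈ G.ends e)).card := by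
    unfold Multigraph.degree
    rw [Finset.sum_comm]
    refine Finset.sum_congr rfl fun e _ => ?_
    rw [Finset.card_filter]
    refine Finset.sum_congr rfl fun z _ => ?_
    have h2 : ¬(G.ends e = Sym2.diag z) := fun h => hl e (h ▸ Sym2.diag_isDiag z)
    simp [Multigraph.incCount, h2]
  have hlhs : ∑ z ∈ D, G.degree z = 3 * D.card := by
    rw [Finset.sum_congr rfl fun z _ => hd z, Finset.sum_const, smul_eq_mul, mul_comm]
  -- now pass to ZMod 2
  have hcast : ((3 * D.card : ℕ) : ZMod 2) = 1 := by
    rw [← hlhs, hsum, Nat.cast_sum]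
    rw [Finset.sum_eq_single g]
    · rw [hg, card_filter_mem_sym2 D (ends_ne hl g hg)]
      simp [hwD, hcD]
    · intro e _ heg
      obtain ⟨p, q, hpq⟩ := sym2_rep (G.ends e)
      have hpqne : p ≠ q := ends_ne hl e hpq
      have hiff : p ∈ D ↔ q ∈ D := by
        rw [hmemD, hmemD]
        exact ⟨fun h => D_mem_step heg h hpq,
               fun h => D_mem_step heg h (by rw [hpq, Sym2.eq_swap])⟩
      rw [hpq, card_filter_mem_sym2 D hpqne]
      by_cases hp : p ∈ D
      · simp only [hp, hiff.mp hp, if_true]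
        decide
      · have hq : q ∉ D := fun h => hp (hiff.mpr h)
        simp [hp, hq]
    · intro h; exact absurd (Finset.mem_univ g) h
  rw [← ZMod.natCast_eq_one_iff_odd]
  have h2 : ((3 : ℕ) : ZMod 2) * (D.card : ℕ) = 1 := by rw [← Nat.cast_mul]; exact hcast
  have h3 : ((3 : ℕ) : ZMod 2) = 1 := by decide
  rw [h3, one_mul] at h2
  exact h2

lemma D_four (hl : G.Loopless) (hd : ∀ v : G.V, G.degree v = 3)
    (hsim : ∀ e e' : G.E, G.ends e = G.ends e' → e = e')
    {g : G.E} {c w : G.V} (hg : G.ends g = s(c, w))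
    (hcw : ¬ G.Reach {e | e ≠ g} c w) :
    4 ≤ (Finset.univ.filter (fun z => G.Reach {e | e ≠ g} w z)).card := by
  classical
  set D := Finset.univ.filter (fun z => G.Reach {e | e ≠ g} w z) with hD
  have hmemD : ∀ z, z ∈ D ↔ G.Reach {e | e ≠ g} w z := by
    intro z; simp [hD]
  have hwD : w ∈ D := (hmemD w).mpr Relation.ReflTransGen.refl
  have hcD : c ∉ D := fun h => D_not_c hcw ((hmemD c).mp h)
  -- pick an edge at w other than g
  have hgw : g ∈ G.star w := mem_star_iff.mpr (by rw [hg]; exact Sym2.mem_mk_right c w)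
  have hcard : ((G.star w).erase g).Nonempty := by
    rw [← Finset.card_pos, Finset.card_erase_of_mem hgw, star_card hl (hd w)]
    omega
  obtain ⟨e', he'⟩ := hcard
  have he'g : e' ≠ g := Finset.ne_of_mem_erase he'
  have he'w : w ∈ G.ends e' := mem_star_iff.mp (Finset.mem_of_mem_erase he')
  obtain ⟨a, ha⟩ := Sym2.mem_iff_exists.mp he'w
  have haw : a ≠ w := (ends_ne hl e' ha).symm
  have haD : a ∈ D := (hmemD a).mpr (Relation.ReflTransGen.single ⟨e', he'g, ha⟩)
  have hac : a ≠ c := fun h => hcD (h ▸ haD)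
  -- the three edges at a
  obtain ⟨x, y, zz, hxy, hxz, hyz, hstar⟩ := Finset.card_eq_three.mp (star_card hl (hd a))
  have hmem3 : ∀ e ∈ G.star a, e ≠ g ∧ a ∈ G.ends e := by
    intro e he
    refine ⟨fun hh => ?_, mem_star_iff.mp he⟩
    subst hh
    have : a ∈ G.ends e := mem_star_iff.mp he
    rw [hg, Sym2.mem_iff] at this
    rcases this with h | h
    · exact hac h
    · exact haw h
  have hx := hmem3 x (by rw [hstar]; simp)
  have hy := hmem3 y (by rw [hstar]; simp)
  have hz := hmem3 zz (by rw [hstar]; simp)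
  obtain ⟨tx, htx⟩ := Sym2.mem_iff_exists.mp hx.2
  obtain ⟨ty, hty⟩ := Sym2.mem_iff_exists.mp hy.2
  obtain ⟨tz, htz⟩ := Sym2.mem_iff_exists.mp hz.2
  have htxa : tx ≠ a := (ends_ne hl x htx).symm
  have htya : ty ≠ a := (ends_ne hl y hty).symm
  have htza : tz ≠ a := (ends_ne hl zz htz).symm
  have htxD : tx ∈ D := (hmemD tx).mpr (D_mem_step hx.1 ((hmemD a).mp haD) htx)
  have htyD : ty ∈ D := (hmemD ty).mpr (D_mem_step hy.1 ((hmemD a).mp haD) hty)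
  have htzD : tz ∈ D := (hmemD tz).mpr (D_mem_step hz.1 ((hmemD a).mp haD) htz)
  have htxy : tx ≠ ty := fun h => hxy (hsim x y (by rw [htx, hty, h]))
  have htxz : tx ≠ tz := fun h => hxz (hsim x zz (by rw [htx, htz, h]))
  have htyz : ty ≠ tz := fun h => hyz (hsim y zz (by rw [hty, htz, h]))
  have hsub : ({a, tx, ty, tz} : Finset G.V) ⊆ D := by
    intro u hu
    simp only [Finset.mem_insert, Finset.mem_singleton] at hu
    rcases hu with rfl | rfl | rfl | rfl
    exacts [haD, htxD, htyD, htzD]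
  have hcard4 : ({a, tx, ty, tz} : Finset G.V).card = 4 := by
    rw [Finset.card_insert_of_notMem (by simp [htxa.symm, htya.symm, htza.symm]),
        Finset.card_insert_of_notMem (by simp [htxy, htxz]),
        Finset.card_insert_of_notMem (by simp [htyz]),
        Finset.card_singleton]
  calc 4 = ({a, tx, ty, tz} : Finset G.V).card := hcard4.symm
    _ ≤ D.card := Finset.card_le_card hsub

end Syl16Aux

namespace Syl16Aux
open Finset

lemma s16_star_card : ∀ x : Fin 16, (Sylvester16.star x).card = 3 := by decide

lemma s16_univ_two :
    ∀ e : Sylvester16.E, ((Finset.univ : Finset (Fin 16)).filter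
      (· ∈ Sylvester16.ends e)).card = 2 := by decide

lemma s16_loopless : ∀ e : Sylvester16.E, ¬ (Sylvester16.ends e).IsDiag := by decide

def bs : Fin 3 → Sylvester16.E :=
  ![⟨s(0,5), by decide⟩, ⟨s(0,10), by decide⟩, ⟨s(0,15), by decide⟩]

def Rs : Fin 3 → Finset (Fin 16) :=
  ![{1,2,3,4,5}, {6,7,8,9,10}, {11,12,13,14,15}]

lemma bs_mem_star0 : ∀ i, (0 : Fin 16) ∈ Sylvester16.ends (bs i) := by
  show ∀ i, (0 : Fin 16) ∈ (bs i).1; decide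
lemma bs_inj : ∀ i j, bs i = bs j → i = j := by decide
lemma Rs_card : ∀ i, (Rs i).card = 5 := by decide
lemma Rs_bridge : ∀ i, ((Rs i).filter (· ∈ Sylvester16.ends (bs i))).card = 1 := by decide
lemma Rs_even : ∀ i, ∀ e : Sylvester16.E, e ≠ bs i →
    ((Rs i).filter (· ∈ Sylvester16.ends e)).card % 2 = 0 := by decide
lemma univ_split :
    (Finset.univ : Finset (Fin 16)) = ({0} ∪ (Rs 0 ∪ (Rs 1 ∪ Rs 2))) := by decide
lemma Rs_disj01 : Disjoint ({0} : Finset (Fin 16)) (Rs 0 ∪ (Rs 1 ∪ Rs 2)) := by decide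
lemma Rs_disj0 : Disjoint (Rs 0) (Rs 1 ∪ Rs 2) := by decide
lemma Rs_disj12 : Disjoint (Rs 1) (Rs 2) := by decide

section Coloring
variable {G : Multigraph} {f : Sylvester16.E → G.E} {phi : Fin 16 → G.V}

lemma f_injOn (hl : G.Loopless) (hd : ∀ v : G.V, G.degree v = 3)
    (hphi : ∀ x, (Sylvester16.star x).image f = G.star (phi x)) (x : Fin 16) :
    Set.InjOn f (Sylvester16.star x) := by
  apply Finset.injOn_of_card_image_eq
  rw [hphi x, star_card hl (hd (phi x)), s16_star_card x]

lemma localcount (hl : G.Loopless) (hd : ∀ v : G.V, G.degree v = 3)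
    (hphi : ∀ x, (Sylvester16.star x).image f = G.star (phi x))
    (x : Fin 16) (h : G.E) :
    ((Sylvester16.star x).filter (fun e => f e = h)).card
      = if phi x ∈ G.ends h then 1 else 0 := by
  classical
  have himg : (G.star (phi x)).filter (· = h)
      = ((Sylvester16.star x).filter (fun e => f e = h)).image f := by
    rw [← hphi x, Finset.filter_image]
  have hcard : ((Sylvester16.star x).filter (fun e => f e = h)).card
      = ((G.star (phi x)).filter (· = h)).card := by
    rw [himg]
    exact (Finset.card_image_of_injOn ((f_injOn hl hd hphi x).mono
      (by exact_mod_cast Finset.coe_subset.mpr (Finset.filter_subset _ _)))).symm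
  rw [hcard, Finset.filter_eq']
  split
  · next hmem =>
    rw [if_pos (mem_star_iff.mp hmem), Finset.card_singleton]
  · next hmem =>
    rw [if_neg (fun hh => hmem (mem_star_iff.mpr hh)), Finset.card_empty]

/-- The key double-counting identity. -/
lemma count_key (hl : G.Loopless) (hd : ∀ v : G.V, G.degree v = 3)
    (hphi : ∀ x, (Sylvester16.star x).image f = G.star (phi x))
    (R : Finset (Fin 16)) {h : G.E} {z z' : G.V}
    (hzz : G.ends h = s(z, z')) (hne : z ≠ z') :
    (R.filter (fun x => phi x = z)).card + (R.filter (fun x => phi x = z')).card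
      = ∑ e : Sylvester16.E,
          if f e = h then (R.filter (· ∈ Sylvester16.ends e)).card else 0 := by
  classical
  have step1 : (R.filter (fun x => phi x = z)).card + (R.filter (fun x => phi x = z')).card
      = (R.filter (fun x => phi x ∈ G.ends h)).card := by
    have h1 : R.filter (fun x => phi x ∈ G.ends h)
        = R.filter (fun x => phi x = z ∨ phi x = z') := by
      refine Finset.filter_congr fun x _ => ?_
      rw [hzz, Sym2.mem_iff]
    rw [h1, Finset.filter_or, Finset.card_union_of_disjoint]
    rw [Finset.disjoint_filter]
    rintro x _ hx1 hx2
    exact hne (hx1 ▸ hx2)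
  rw [step1, Finset.card_filter]
  have step2 : ∀ x ∈ R, (if phi x ∈ G.ends h then 1 else 0)
      = ∑ e : Sylvester16.E, if x ∈ Sylvester16.ends e ∧ f e = h then 1 else 0 := by
    intro x _
    rw [← localcount hl hd hphi x h]
    have : (Sylvester16.star x).filter (fun e => f e = h)
        = Finset.univ.filter (fun e => x ∈ Sylvester16.ends e ∧ f e = h) := by
      unfold Multigraph.star
      rw [Finset.filter_filter]
      convert rfl <;> exact Iff.rfl
    rw [this, Finset.card_filter]
  rw [Finset.sum_congr rfl step2, Finset.sum_comm]
  refine Finset.sum_congr rfl fun e _ => ?_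
  by_cases hfe : f e = h
  · rw [if_pos hfe]; erw [Finset.card_filter]
    refine Finset.sum_congr rfl fun x _ => ?_
    simp [hfe]
    convert rfl <;> exact Iff.rfl
  · rw [if_neg hfe]
    refine Finset.sum_eq_zero fun x _ => ?_
    simp [hfe]

/-- Parity of block-fiber counts: flips exactly across the image of the block bridge. -/
lemma parity_region (hl : G.Loopless) (hd : ∀ v : G.V, G.degree v = 3)
    (hphi : ∀ x, (Sylvester16.star x).image f = G.star (phi x))
    (i : Fin 3) {h : G.E} {z z' : G.V}
    (hzz : G.ends h = s(z, z')) (hne : z ≠ z') :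
    ((((Rs i).filter (fun x => phi x = z)).card : ZMod 2)
      + (((Rs i).filter (fun x => phi x = z')).card : ZMod 2))
      = if h = f (bs i) then 1 else 0 := by
  classical
  have hkey := count_key hl hd hphi (Rs i) hzz hne
  have hcast : ((((Rs i).filter (fun x => phi x = z)).card
      + ((Rs i).filter (fun x => phi x = z')).card : ℕ) : ZMod 2)
      = ∑ e : Sylvester16.E, ((if f e = h
          then ((Rs i).filter (· ∈ Sylvester16.ends e)).card else 0 : ℕ) : ZMod 2) := by
    rw [hkey, Nat.cast_sum]
  rw [Nat.cast_add] at hcast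
  rw [hcast, Finset.sum_eq_single (bs i)]
  · by_cases hb : f (bs i) = h
    · rw [if_pos hb, if_pos hb.symm, Rs_bridge i]; norm_num
    · rw [if_neg hb, if_neg (fun hh => hb hh.symm)]; norm_num
  · intro e _ heb
    by_cases hfe : f e = h
    · rw [if_pos hfe]
      exact ZMod.natCast_eq_zero_iff_even.mpr (Nat.even_iff.mpr (Rs_even i e heb))
    · rw [if_neg hfe]; norm_num
  · intro hmem; exact absurd (Finset.mem_univ _) hmem
end Coloring
end Syl16Aux


open Finset Syl16Aux in
/-- if G is a connected simple cubic graph and S₁₆ admits a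
G-coloring (G ≺ S₁₆), then G = S₁₆. -/
theorem sylvester16_gcoloring_implies_iso (G : Multigraph) (hconn : G.Connected)
    (hs : G.Simple) (hc : G.Cubic)
    (hcol : ∃ f : Sylvester16.E → G.E, Multigraph.IsHColoring Sylvester16 G f) :
    Multigraph.IsIsomorphicTo G Sylvester16 := by
  classical
  obtain ⟨f, hf⟩ := hcol
  obtain ⟨hl, hd⟩ := hc
  have hsim : ∀ e e' : G.E, G.ends e = G.ends e' → e = e' := hs.2
  choose phi hphi using hf
  set c : G.V := phi (0 : Fin 16) with hc0
  -- the three bridge images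
  have hgmem : ∀ i : Fin 3, c ∈ G.ends (f (bs i)) := by
    intro i
    have h1 : f (bs i) ∈ G.star c := by
      rw [← hphi (0 : Fin 16)]
      exact Finset.mem_image_of_mem f (mem_star_iff.mpr (bs_mem_star0 i))
    exact mem_star_iff.mp h1
  have hw : ∀ i : Fin 3, ∃ wi : G.V, G.ends (f (bs i)) = s(c, wi) :=
    fun i => Sym2.mem_iff_exists.mp (hgmem i)
  choose w hwspec using hw
  have hginj : ∀ i j, f (bs i) = f (bs j) → i = j := by
    intro i j hij
    apply bs_inj
    exact f_injOn hl hd hphi (0 : Fin 16) (Finset.mem_coe.mpr (mem_star_iff.mpr (bs_mem_star0 i)))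
      (Finset.mem_coe.mpr (mem_star_iff.mpr (bs_mem_star0 j))) hij
  -- parity functions
  set m : Fin 3 → G.V → ℕ := fun i z => ((Rs i).filter (fun x => phi x = z)).card with hm
  set P : Fin 3 → G.V → ZMod 2 := fun i z => ((m i z : ℕ) : ZMod 2) with hP
  have zmod2add : ∀ x y : ZMod 2, x + y = 0 → x = y := by decide
  have zmod2add1 : ∀ x y : ZMod 2, x + y = 1 → x ≠ y := by decide
  have hPinv : ∀ i : Fin 3, ∀ e ∈ {e : G.E | e ≠ f (bs i)}, ∀ a b : G.V,
      G.ends e = s(a, b) → P i a = P i b := by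
    intro i e he a b hab
    have := parity_region hl hd hphi i hab (ends_ne hl e hab)
    rw [if_neg he] at this
    exact zmod2add _ _ this
  have hPne : ∀ i : Fin 3, P i c ≠ P i (w i) := by
    intro i
    have := parity_region hl hd hphi i (hwspec i) (ends_ne hl _ (hwspec i))
    rw [if_pos rfl] at this
    exact zmod2add1 _ _ this
  have hcwReach : ∀ i : Fin 3, ¬ G.Reach {e | e ≠ f (bs i)} c (w i) :=
    fun i h => hPne i (reach_invariant (hPinv i) h)
  -- the block sides
  set Df : Fin 3 → Finset G.V :=
    fun i => Finset.univ.filter (fun z => G.Reach {e | e ≠ f (bs i)} (w i) z) with hDf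
  have hmemD : ∀ i z, z ∈ Df i ↔ G.Reach {e | e ≠ f (bs i)} (w i) z := by
    intro i z; simp [hDf]
  have hcD : ∀ i, c ∉ Df i := fun i h => D_not_c (hcwReach i) ((hmemD i c).mp h)
  have hD5 : ∀ i, 5 ≤ (Df i).card := by
    intro i
    have h4 := D_four hl hd hsim (hwspec i) (hcwReach i)
    have hodd := D_odd hl hd (hwspec i) (hcwReach i)
    have hfold : (Finset.univ.filter fun z => G.Reach {e | e ≠ f (bs i)} (w i) z) = Df i := rfl
    rw [hfold] at h4 hodd
    rw [Nat.odd_iff] at hodd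
    omega
  -- cross-block containment
  have hcross : ∀ i j : Fin 3, i ≠ j → ∀ z ∈ Df j,
      G.Reach {e | e ≠ f (bs i)} c z ∧ z ≠ c := by
    intro i j hij z hz
    exact cross_block hl (fun h => hij (hginj i j h)) (hwspec j) (hwspec i)
      (D_not_c (hcwReach j)) z ((hmemD j z).mp hz)
  have hDdisj : ∀ i j : Fin 3, i ≠ j → ∀ z, z ∈ Df i → z ∉ Df j := by
    intro i j hij z hzi hzj
    have h1 := (hcross i j hij z hzj).1
    have h2 : G.Reach {e | e ≠ f (bs i)} c (w i) :=
      h1.trans (reach_symm ((hmemD i z).mp hzi))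
    exact hcwReach i h2
  -- total block fiber count
  have hmsum : ∀ i : Fin 3, ∑ z : G.V, m i z = 5 := by
    intro i
    rw [hm]
    erw [← Finset.card_eq_sum_card_fiberwise (fun x _ => Finset.mem_univ (phi x))]
    exact Rs_card i
  -- the c-side cannot be the odd side
  have hPc : ∀ i : Fin 3, P i c = 0 := by
    intro i
    by_contra h
    have h1 : P i c = 1 := by
      rcases (by decide : ∀ x : ZMod 2, x = 0 ∨ x = 1) (P i c) with h' | h'
      · exact absurd h' h
      · exact h'
    have hCodd : ∀ z, G.Reach {e | e ≠ f (bs i)} c z → 1 ≤ m i z := by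
      intro z hz
      have hPz : P i z = 1 := (reach_invariant (hPinv i) hz).symm.trans h1
      have hodd : Odd (m i z) := ZMod.natCast_eq_one_iff_odd.mp hPz
      rcases hodd with ⟨k, hk⟩; omega
    obtain ⟨j, k, hij, hik, hjk⟩ : ∃ j k : Fin 3, i ≠ j ∧ i ≠ k ∧ j ≠ k := by
      fin_cases i
      · exact ⟨1, 2, by decide, by decide, by decide⟩
      · exact ⟨0, 2, by decide, by decide, by decide⟩
      · exact ⟨0, 1, by decide, by decide, by decide⟩
    set S : Finset G.V := insert c (Df j ∪ Df k) with hS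
    have hScard : S.card = 1 + ((Df j).card + (Df k).card) := by
      rw [hS, Finset.card_insert_of_notMem (by
        rw [Finset.mem_union]; rintro (h' | h')
        exacts [hcD j h', hcD k h'])]
      rw [Finset.card_union_of_disjoint (Finset.disjoint_left.mpr
        (fun z hz => hDdisj j k hjk z hz))]
      omega
    have hSodd : ∀ z ∈ S, 1 ≤ m i z := by
      intro z hz
      rw [hS, Finset.mem_insert, Finset.mem_union] at hz
      rcases hz with hz | hz | hz
      · rw [hz]; exact hCodd c Relation.ReflTransGen.refl
      · exact hCodd z (hcross i j hij z hz).1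
      · exact hCodd z (hcross i k hik z hz).1
    have hb1 : S.card • 1 ≤ ∑ z ∈ S, m i z := Finset.card_nsmul_le_sum S (m i) 1 hSodd
    have hb2 : ∑ z ∈ S, m i z ≤ ∑ z : G.V, m i z :=
      Finset.sum_le_sum_of_subset (Finset.subset_univ S)
    rw [hmsum i] at hb2
    have := hD5 j
    have := hD5 k
    simp only [smul_eq_mul, mul_one] at hb1
    omega
  -- hence each block fiber function is the indicator of Df i
  have hmval : ∀ i : Fin 3, ∀ z, m i z = if z ∈ Df i then 1 else 0 := by
    intro i
    have hPw : P i (w i) = 1 := by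
      rcases (by decide : ∀ x : ZMod 2, x = 0 ∨ x = 1) (P i (w i)) with h' | h'
      · exact absurd (((hPc i).trans h'.symm)) (hPne i)
      · exact h'
    have hDodd1 : ∀ z ∈ Df i, 1 ≤ m i z := by
      intro z hz
      have hPz : P i z = 1 := (reach_invariant (hPinv i) ((hmemD i z).mp hz)).symm.trans hPw
      rcases ZMod.natCast_eq_one_iff_odd.mp hPz with ⟨k, hk⟩; omega
    have hsub : ∑ z ∈ Df i, m i z ≤ 5 := by
      rw [← hmsum i]
      exact Finset.sum_le_sum_of_subset (Finset.subset_univ _)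
    have hge : (Df i).card • 1 ≤ ∑ z ∈ Df i, m i z :=
      Finset.card_nsmul_le_sum _ _ 1 hDodd1
    simp only [smul_eq_mul, mul_one] at hge
    have hcard5 : (Df i).card = 5 := le_antisymm (le_trans hge hsub) (hD5 i)
    have hsumD : ∑ z ∈ Df i, m i z = 5 := le_antisymm hsub (hcard5 ▸ hge)
    have hm1 : ∀ z ∈ Df i, m i z = 1 := by
      intro z0 hz0
      have herase : (Df i).erase z0 ⊆ Df i := Finset.erase_subset z0 (Df i)
      have hge4 : ((Df i).erase z0).card • 1 ≤ ∑ z ∈ (Df i).erase z0, m i z :=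
        Finset.card_nsmul_le_sum _ _ 1 (fun z hz => hDodd1 z (herase hz))
      rw [Finset.card_erase_of_mem hz0, hcard5] at hge4
      have hadd : m i z0 + ∑ z ∈ (Df i).erase z0, m i z = ∑ z ∈ Df i, m i z :=
        Finset.add_sum_erase (Df i) (m i) hz0
      have h1 := hDodd1 z0 hz0
      simp only [smul_eq_mul, mul_one] at hge4
      omega
    have hm0 : ∀ z ∉ Df i, m i z = 0 := by
      intro z0 hz0
      have hsd : ∑ z ∈ Finset.univ \ Df i, m i z + ∑ z ∈ Df i, m i z = ∑ z : G.V, m i z :=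
        Finset.sum_sdiff (Finset.subset_univ _)
      rw [hsumD, hmsum i] at hsd
      have : ∑ z ∈ Finset.univ \ Df i, m i z = 0 := by omega
      exact (Finset.sum_eq_zero_iff.mp this) z0
        (Finset.mem_sdiff.mpr ⟨Finset.mem_univ z0, hz0⟩)
    intro z
    by_cases hz : z ∈ Df i
    · rw [if_pos hz]; exact hm1 z hz
    · rw [if_neg hz]; exact hm0 z hz
  -- the total fiber count
  set n : G.V → ℕ := fun z => ((Finset.univ : Finset (Fin 16)).filter
    (fun x => phi x = z)).card with hn
  have hnsplit : ∀ z, n z = (if phi (0 : Fin 16) = z then 1 else 0) + (m 0 z + (m 1 z + m 2 z)) := by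
    intro z
    have key : ∀ p : Fin 16 → G.V, ((Finset.univ : Finset (Fin 16)).filter
        (fun x => p x = z)).card = (if p (0 : Fin 16) = z then 1 else 0) +
        (((Rs 0).filter (fun x => p x = z)).card + (((Rs 1).filter (fun x => p x = z)).card
          + ((Rs 2).filter (fun x => p x = z)).card)) := by
      intro p
      rw [univ_split, Finset.filter_union,
          Finset.card_union_of_disjoint (Finset.disjoint_filter_filter Rs_disj01),
          Finset.filter_union,
          Finset.card_union_of_disjoint (Finset.disjoint_filter_filter Rs_disj0),
          Finset.filter_union,
          Finset.card_union_of_disjoint (Finset.disjoint_filter_filter Rs_disj12)]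
      congr 1
      rw [Finset.filter_singleton]
      split <;> simp
    exact key phi
  have hnc : n c = 1 := by
    rw [hnsplit c, if_pos rfl, hmval 0, hmval 1, hmval 2,
      if_neg (hcD 0), if_neg (hcD 1), if_neg (hcD 2)]
  have hnle : ∀ z, n z ≤ 1 := by
    intro z
    rw [hnsplit z, hmval 0, hmval 1, hmval 2]
    by_cases h0 : phi (0 : Fin 16) = z
    · have : z = c := h0.symm
      subst this
      rw [if_neg (hcD 0), if_neg (hcD 1), if_neg (hcD 2)]
      split <;> simp
    · rw [if_neg h0]
      by_cases hz0 : z ∈ Df 0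
      · rw [if_neg (hDdisj 0 1 (by decide) z hz0), if_neg (hDdisj 0 2 (by decide) z hz0)]
        split <;> simp
      · by_cases hz1 : z ∈ Df 1
        · rw [if_neg hz0, if_neg (hDdisj 1 2 (by decide) z hz1)]
          split <;> simp
        · rw [if_neg hz0, if_neg hz1]
          split <;> simp
  -- the preimage-count identity over the whole vertex set
  have hsum2 : ∀ h : G.E,
      (∑ e' : Sylvester16.E, if f e' = h
        then ((Finset.univ : Finset (Fin 16)).filter (· ∈ Sylvester16.ends e')).card else 0)
      = 2 * (Finset.univ.filter (fun e' => f e' = h)).card := by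
    intro h
    rw [← Finset.sum_filter]
    rw [Finset.sum_congr rfl (fun e' _ => s16_univ_two e')]
    rw [Finset.sum_const, smul_eq_mul, mul_comm]
  have hcount : ∀ (h : G.E) {z z' : G.V}, G.ends h = s(z, z') → z ≠ z' →
      n z + n z' = 2 * (Finset.univ.filter (fun e' => f e' = h)).card := by
    intro h z z' hzz hne
    have hck := count_key hl hd hphi (Finset.univ : Finset (Fin 16)) hzz hne
    exact hck.trans (hsum2 h)
  -- every vertex has fiber count one
  have hn1 : ∀ z, n z = 1 := by
    have key : ∀ z, G.Reach Set.univ c z → n z = 1 := by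
      intro z hz
      induction hz with
      | refl => exact hnc
      | tail hpre hstep ih =>
        rename_i b bb
        obtain ⟨e, _, hab⟩ := hstep
        have hne := ends_ne hl e hab
        have hcnt := hcount e hab hne
        have hle := hnle bb
        omega
    intro z
    exact key z (hconn c z)
  -- phi is bijective
  have hphiInj : Function.Injective phi := by
    intro a b hab
    by_contra hne
    have hsub2 : ({a, b} : Finset (Fin 16)) ⊆
        (Finset.univ : Finset (Fin 16)).filter (fun x => phi x = phi a) := by
      intro x hx
      erw [Finset.mem_insert, Finset.mem_singleton] at hx
      rcases hx with rfl | rfl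
      · exact Finset.mem_filter.mpr ⟨Finset.mem_univ _, rfl⟩
      · exact Finset.mem_filter.mpr ⟨Finset.mem_univ _, hab.symm⟩
    have hB : ((Finset.univ : Finset (Fin 16)).filter (fun x => phi x = phi a)).card ≤ 1 :=
      le_of_eq (hn1 (phi a))
    have hmema : a ∈ (Finset.univ : Finset (Fin 16)).filter (fun x => phi x = phi a) :=
      Finset.mem_filter.mpr ⟨Finset.mem_univ _, rfl⟩
    have hmemb : b ∈ (Finset.univ : Finset (Fin 16)).filter (fun x => phi x = phi a) :=
      Finset.mem_filter.mpr ⟨Finset.mem_univ _, hab.symm⟩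
    exact hne (Finset.card_le_one.mp hB a hmema b hmemb)
  have hphiSurj : Function.Surjective phi := by
    intro z
    have h1 : ((Finset.univ : Finset (Fin 16)).filter (fun x => phi x = z)).card = 1 := hn1 z
    have hpos : 0 < ((Finset.univ : Finset (Fin 16)).filter (fun x => phi x = z)).card := by
      omega
    obtain ⟨x, hx⟩ := Finset.card_pos.mp hpos
    exact ⟨x, (Finset.mem_filter.mp hx).2⟩
  -- f is bijective
  have hfInj : Function.Injective f := by
    intro e e' hee
    by_contra hne'
    obtain ⟨z, z', hzz⟩ := sym2_rep (G.ends (f e))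
    have hnez := ends_ne hl (f e) hzz
    have hcnt := hcount (f e) hzz hnez
    rw [hn1 z, hn1 z'] at hcnt
    have hsubee : ({e, e'} : Finset Sylvester16.E) ⊆
        Finset.univ.filter (fun e'' => f e'' = f e) := by
      intro x hx
      rw [Finset.mem_insert, Finset.mem_singleton] at hx
      rcases hx with rfl | rfl
      · exact Finset.mem_filter.mpr ⟨Finset.mem_univ _, rfl⟩
      · exact Finset.mem_filter.mpr ⟨Finset.mem_univ _, hee.symm⟩
    have h2 : ({e, e'} : Finset Sylvester16.E).card = 2 := by
      rw [Finset.card_insert_of_notMem (by simpa using hne'), Finset.card_singleton]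
    have := Finset.card_le_card hsubee
    rw [h2] at this
    omega
  have hfSurj : Function.Surjective f := by
    intro h
    obtain ⟨z, z', hzz⟩ := sym2_rep (G.ends h)
    obtain ⟨x, hx⟩ := hphiSurj z
    have hmem : h ∈ G.star (phi x) := by
      rw [hx]
      exact mem_star_iff.mpr (by rw [hzz]; exact Sym2.mem_mk_left z z')
    rw [← hphi x] at hmem
    obtain ⟨e, _, he⟩ := Finset.mem_image.mp hmem
    exact ⟨e, he⟩
  -- assemble the isomorphism
  have hphiBij : Function.Bijective phi := ⟨hphiInj, hphiSurj⟩
  have hfBij : Function.Bijective f := ⟨hfInj, hfSurj⟩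
  set vE : G.V ≃ Sylvester16.V := (Equiv.ofBijective phi hphiBij).symm with hvE
  set eE : G.E ≃ Sylvester16.E := (Equiv.ofBijective f hfBij).symm with heE
  refine ⟨⟨vE, eE, ?_⟩⟩
  intro e
  have hfe : f (eE e) = e := (Equiv.ofBijective f hfBij).apply_symm_apply e
  obtain ⟨u, v, huv⟩ := sym2_rep (Sylvester16.ends (eE e))
  have huvne : u ≠ v := by
    intro h
    exact s16_loopless (eE e) (by rw [huv, h]; exact Sym2.mk_isDiag_iff.mpr rfl)
  have hpu : phi u ∈ G.ends e := by
    rw [← hfe]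
    refine mem_star_iff.mp ?_
    rw [← hphi u]
    exact Finset.mem_image_of_mem f (mem_star_iff.mpr (by
      rw [huv]; exact Sym2.mem_mk_left u v))
  have hpv : phi v ∈ G.ends e := by
    rw [← hfe]
    refine mem_star_iff.mp ?_
    rw [← hphi v]
    exact Finset.mem_image_of_mem f (mem_star_iff.mpr (by
      rw [huv]; exact Sym2.mem_mk_right u v))
  have hpune : phi u ≠ phi v := fun h => huvne (hphiInj h)
  obtain ⟨z, z', hzz⟩ := sym2_rep (G.ends e)
  have hends : G.ends e = s(phi u, phi v) := by
    rw [hzz, Sym2.mem_iff] at hpu hpv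
    rw [hzz]
    rcases hpu with h1 | h1 <;> rcases hpv with h2 | h2
    · exact absurd (h1.trans h2.symm) hpune
    · rw [h1, h2]
    · rw [h1, h2, Sym2.eq_swap]
    · exact absurd (h1.trans h2.symm) hpune
  rw [huv, hends, Sym2.map_pair_eq]
  have hu : vE (phi u) = u := (Equiv.ofBijective phi hphiBij).symm_apply_apply u
  have hv : vE (phi v) = v := (Equiv.ofBijective phi hphiBij).symm_apply_apply v
  rw [hu, hv]
end

section
/- The Petersen graph P does not admit an S_16-coloring, where S_16 is the Sylvester simple graph on 16 vertices. -/
open scoped Classical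

namespace PNoS16

def pvL : List (List Nat) := [[0, 4, 5], [0, 1, 6], [1, 2, 7], [2, 3, 8], [3, 4, 9], [5, 10, 14], [7, 10, 11], [9, 11, 12], [6, 12, 13], [8, 13, 14]]

def svL : List (List Nat) := [[7, 15, 23], [0, 1, 2], [0, 3, 4], [1, 3, 5], [2, 4, 6], [5, 6, 7], [8, 9, 10], [8, 11, 12], [9, 11, 13], [10, 12, 14], [13, 14, 15], [16, 17, 18], [16, 19, 20], [17, 19, 21], [18, 20, 22], [21, 22, 23]]

def permL : List (List Nat) := [[0, 1, 2], [0, 2, 1], [1, 0, 2], [1, 2, 0], [2, 0, 1], [2, 1, 0]]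

def CL : List (List (Nat × Nat × Nat)) := [[], [(0, 0, 0)], [(0, 0, 1)], [(0, 0, 1)], [(0, 0, 1), (3, 1, 1)], [(4, 0, 2)], [(3, 0, 2), (0, 1, 1)], [(2, 0, 2), (0, 1, 2)], [(6, 0, 2), (0, 1, 2)], [(5, 0, 2), (0, 1, 2), (3, 2, 2)]]

def oL : List Nat := [0, 1, 2, 3, 4, 5, 7, 9, 6, 8]

def TN : ℕ := 28988396611468761509405734228458607758732283887114993986766163483638071885675377544647338522854108794157471674909161677423264978642873258312099389924328803796943542940608592823364268770302880068916840097512274387817904040530924825149961200690046305955408969464645347745474611044542506091308921019880274223948286851190084051467983872069746715603893613407869041878330644357419946250722919311532400431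
def AN : ℕ := 7586402620151617139374811707426836651683315454178880586125772399238292452817077378397370742765989807404670322023584724879918889998473801427792587762746909098505987223399445403130461959448686877989316223504255534771950865635137456934917955933646839139767380368809226664099931487469864672193168419477525278316286746000746929639258106907711694886024907215347060042326486335226972359304216639562189671614848924021001695905698697628946808206065994841535965754278751114446862524856079513411072302985155774605397163314844187576487573108931625483364339565220462157937740551893670

def pvT (n k : ℕ) : ℕ := (pvL.getD n []).getD k 0
def svT (y k : ℕ) : ℕ := (svL.getD y []).getD k 0
def permT (p k : ℕ) : ℕ := (permL.getD p []).getD k 0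
def tripT (j k : ℕ) : ℕ := TN / 24 ^ (3 * j + k) % 24
def Cn (n : ℕ) : List (ℕ × ℕ × ℕ) := CL.getD n []
def allowT (s x : ℕ) : List ℕ :=
  let e := AN / (96 ^ 4) ^ (24 * s + x) % 96 ^ 4
  [e % 96, e / 96 % 96, e / 96 ^ 2 % 96, e / 96 ^ 3 % 96]
def oV (n : ℕ) : ℕ := oL.getD n 0

def pV (n : ℕ) : Petersen.V := show Fin 10 from ⟨oV n % 10, by omega⟩

def peN : ℕ → Petersen.E
  | 0 => ⟨s(0,1), by decide⟩
  | 1 => ⟨s(1,2), by decide⟩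
  | 2 => ⟨s(2,3), by decide⟩
  | 3 => ⟨s(3,4), by decide⟩
  | 4 => ⟨s(4,0), by decide⟩
  | 5 => ⟨s(0,5), by decide⟩
  | 6 => ⟨s(1,6), by decide⟩
  | 7 => ⟨s(2,7), by decide⟩
  | 8 => ⟨s(3,8), by decide⟩
  | 9 => ⟨s(4,9), by decide⟩
  | 10 => ⟨s(5,7), by decide⟩
  | 11 => ⟨s(7,9), by decide⟩
  | 12 => ⟨s(9,6), by decide⟩
  | 13 => ⟨s(6,8), by decide⟩
  | 14 => ⟨s(8,5), by decide⟩
  | _ => ⟨s(0,1), by decide⟩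

def seN : ℕ → Sylvester16.E
  | 0 => ⟨s(1,2), by decide⟩
  | 1 => ⟨s(1,3), by decide⟩
  | 2 => ⟨s(1,4), by decide⟩
  | 3 => ⟨s(2,3), by decide⟩
  | 4 => ⟨s(2,4), by decide⟩
  | 5 => ⟨s(3,5), by decide⟩
  | 6 => ⟨s(4,5), by decide⟩
  | 7 => ⟨s(0,5), by decide⟩
  | 8 => ⟨s(6,7), by decide⟩
  | 9 => ⟨s(6,8), by decide⟩
  | 10 => ⟨s(6,9), by decide⟩
  | 11 => ⟨s(7,8), by decide⟩
  | 12 => ⟨s(7,9), by decide⟩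
  | 13 => ⟨s(8,10), by decide⟩
  | 14 => ⟨s(9,10), by decide⟩
  | 15 => ⟨s(0,10), by decide⟩
  | 16 => ⟨s(11,12), by decide⟩
  | 17 => ⟨s(11,13), by decide⟩
  | 18 => ⟨s(11,14), by decide⟩
  | 19 => ⟨s(12,13), by decide⟩
  | 20 => ⟨s(12,14), by decide⟩
  | 21 => ⟨s(13,15), by decide⟩
  | 22 => ⟨s(14,15), by decide⟩
  | 23 => ⟨s(0,15), by decide⟩
  | _ => ⟨s(1,2), by decide⟩

lemma D1 : ∀ n < 10, Petersen.star (pV n) =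
    {peN (pvT n 0), peN (pvT n 1), peN (pvT n 2)} := by decide

lemma D2 : ∀ y : Fin 16, Sylvester16.star y =
    {seN (svT y.val 0), seN (svT y.val 1), seN (svT y.val 2)} := by
  intro y; fin_cases y <;> decide

lemma D3 : ∀ y : Fin 16, (Sylvester16.star y).card = 3 := by decide

lemma D4 : ∀ i < 24, ∀ j < 24, seN i = seN j → i = j := by decide

lemma D5 : ∀ n < 10, ∀ p ∈ Cn n,
    p.1 < n ∧ p.2.1 < 3 ∧ p.2.2 < 3 ∧ pvT n p.2.1 = pvT (n - 1 - p.1) p.2.2 := by decide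

set_option maxHeartbeats 1000000 in
lemma D6 : ∀ j < 96, ∀ k < 3, tripT j k < 24 := by decide

set_option maxHeartbeats 1000000 in
lemma D7 : ∀ y < 16, ∀ p < 6, ∀ k < 3, tripT (6 * y + p) k = svT y (permT p k) := by decide

def get (acc d : ℕ) : ℕ := acc / 96 ^ d % 96
def ok (n acc v : ℕ) : Bool :=
  (Cn n).all fun p => tripT v p.2.1 == tripT (get acc p.1) p.2.2
def candsAux : List (ℕ × ℕ × ℕ) → ℕ → List ℕ
  | [], _ => List.range 96
  | p :: _, acc => allowT p.2.1 (tripT (get acc p.1) p.2.2)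
def cands (n acc : ℕ) : List ℕ := candsAux (Cn n) acc
def search : ℕ → ℕ → ℕ → Bool
  | 0, _, _ => true
  | r + 1, n, acc => (cands n acc).any fun v => ok n acc v && search r (n + 1) (v + 96 * acc)

set_option maxHeartbeats 1000000 in
lemma D9 : ∀ v < 96, ∀ s < 3, v ∈ allowT s (tripT v s) := by decide

lemma card3_ne {α : Type} [DecidableEq α] {u v w : α}
    (h : ({u, v, w} : Finset α).card = 3) : u ≠ v ∧ u ≠ w ∧ v ≠ w := by
  refine ⟨?_, ?_, ?_⟩ <;> rintro rfl
  · have h2 : ({u, u, w} : Finset α) = {u, w} := by simp [Finset.insert_idem]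
    rw [h2] at h
    have := Finset.card_insert_le u ({w} : Finset α)
    simp at this; omega
  · have h2 : ({u, v, u} : Finset α) = {u, v} := by
      ext x; simp; tauto
    rw [h2] at h
    have := Finset.card_insert_le u ({v} : Finset α)
    simp at this; omega
  · have h2 : ({u, v, v} : Finset α) = {u, v} := by simp
    rw [h2] at h
    have := Finset.card_insert_le u ({v} : Finset α)
    simp at this; omega

lemma perm3 {α : Type} [DecidableEq α] {a b c u v w : α}
    (h : ({a, b, c} : Finset α) = {u, v, w})
    (hcard : ({u, v, w} : Finset α).card = 3) :
    (a = u ∧ b = v ∧ c = w) ∨ (a = u ∧ b = w ∧ c = v) ∨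
    (a = v ∧ b = u ∧ c = w) ∨ (a = v ∧ b = w ∧ c = u) ∨
    (a = w ∧ b = u ∧ c = v) ∨ (a = w ∧ b = v ∧ c = u) := by
  have hcard' : ({a, b, c} : Finset α).card = 3 := by rw [h]; exact hcard
  obtain ⟨hab, hac, hbc⟩ := card3_ne hcard'
  have ha : a = u ∨ a = v ∨ a = w := by
    have : a ∈ ({u, v, w} : Finset α) := by rw [← h]; simp
    simpa using this
  have hb : b = u ∨ b = v ∨ b = w := by
    have : b ∈ ({u, v, w} : Finset α) := by rw [← h]; simp
    simpa using this
  have hc : c = u ∨ c = v ∨ c = w := by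
    have : c ∈ ({u, v, w} : Finset α) := by rw [← h]; simp
    simpa using this
  rcases ha with h1 | h1 | h1 <;> rcases hb with h2 | h2 | h2 <;>
    rcases hc with h3 | h3 | h3 <;>
    first
      | exact absurd (h1.trans h2.symm) hab
      | exact absurd (h1.trans h3.symm) hac
      | exact absurd (h2.trans h3.symm) hbc
      | exact Or.inl ⟨h1, h2, h3⟩
      | exact Or.inr (Or.inl ⟨h1, h2, h3⟩)
      | exact Or.inr (Or.inr (Or.inl ⟨h1, h2, h3⟩))
      | exact Or.inr (Or.inr (Or.inr (Or.inl ⟨h1, h2, h3⟩)))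
      | exact Or.inr (Or.inr (Or.inr (Or.inr (Or.inl ⟨h1, h2, h3⟩))))
      | exact Or.inr (Or.inr (Or.inr (Or.inr (Or.inr ⟨h1, h2, h3⟩))))

lemma key1 (y : Fin 16) (a b c : Sylvester16.E)
    (h : ({a, b, c} : Finset Sylvester16.E) = Sylvester16.star y) :
    ∃ p < 6, a = seN (svT y.val (permT p 0)) ∧ b = seN (svT y.val (permT p 1)) ∧
      c = seN (svT y.val (permT p 2)) := by
  have hst := D2 y
  have hcard : ({seN (svT y.val 0), seN (svT y.val 1), seN (svT y.val 2)} :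
      Finset Sylvester16.E).card = 3 := by rw [← hst]; exact D3 y
  have h' : ({a, b, c} : Finset Sylvester16.E) =
      {seN (svT y.val 0), seN (svT y.val 1), seN (svT y.val 2)} := by rw [h, hst]
  rcases perm3 h' hcard with ⟨h1, h2, h3⟩ | ⟨h1, h2, h3⟩ | ⟨h1, h2, h3⟩ |
    ⟨h1, h2, h3⟩ | ⟨h1, h2, h3⟩ | ⟨h1, h2, h3⟩
  · exact ⟨0, by norm_num, by rw [show permT 0 0 = 0 by decide]; exact h1,
      by rw [show permT 0 1 = 1 by decide]; exact h2,
      by rw [show permT 0 2 = 2 by decide]; exact h3⟩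
  · exact ⟨1, by norm_num, by rw [show permT 1 0 = 0 by decide]; exact h1,
      by rw [show permT 1 1 = 2 by decide]; exact h2,
      by rw [show permT 1 2 = 1 by decide]; exact h3⟩
  · exact ⟨2, by norm_num, by rw [show permT 2 0 = 1 by decide]; exact h1,
      by rw [show permT 2 1 = 0 by decide]; exact h2,
      by rw [show permT 2 2 = 2 by decide]; exact h3⟩
  · exact ⟨3, by norm_num, by rw [show permT 3 0 = 1 by decide]; exact h1,
      by rw [show permT 3 1 = 2 by decide]; exact h2,
      by rw [show permT 3 2 = 0 by decide]; exact h3⟩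
  · exact ⟨4, by norm_num, by rw [show permT 4 0 = 2 by decide]; exact h1,
      by rw [show permT 4 1 = 0 by decide]; exact h2,
      by rw [show permT 4 2 = 1 by decide]; exact h3⟩
  · exact ⟨5, by norm_num, by rw [show permT 5 0 = 2 by decide]; exact h1,
      by rw [show permT 5 1 = 1 by decide]; exact h2,
      by rw [show permT 5 2 = 0 by decide]; exact h3⟩

lemma key (f : Petersen.E → Sylvester16.E)
    (hf : Multigraph.IsHColoring Petersen Sylvester16 f) :
    ∀ n < 10, ∃ j < 96, ∀ k < 3, f (peN (pvT n k)) = seN (tripT j k) := by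
  intro n hn
  obtain ⟨y, hy⟩ := hf (pV n)
  rw [D1 n hn] at hy
  rw [Finset.image_insert, Finset.image_insert, Finset.image_singleton] at hy
  obtain ⟨p, hp6, h0, h1, h2⟩ := key1 y _ _ _ hy
  refine ⟨6 * y.val + p, by omega, ?_⟩
  intro k hk
  rw [D7 y.val y.isLt p hp6 k hk]
  interval_cases k
  · exact h0
  · exact h1
  · exact h2

set_option maxHeartbeats 0 in
lemma sf0 : search 9 1 0 = false := by decide
set_option maxHeartbeats 0 in
lemma sf1 : search 9 1 1 = false := by decide
set_option maxHeartbeats 0 in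
lemma sf2 : search 9 1 2 = false := by decide
set_option maxHeartbeats 0 in
lemma sf3 : search 9 1 3 = false := by decide
set_option maxHeartbeats 0 in
lemma sf4 : search 9 1 4 = false := by decide
set_option maxHeartbeats 0 in
lemma sf5 : search 9 1 5 = false := by decide
set_option maxHeartbeats 0 in
lemma sf6 : search 9 1 6 = false := by decide
set_option maxHeartbeats 0 in
lemma sf7 : search 9 1 7 = false := by decide
set_option maxHeartbeats 0 in
lemma sf8 : search 9 1 8 = false := by decide
set_option maxHeartbeats 0 in
lemma sf9 : search 9 1 9 = false := by decide
set_option maxHeartbeats 0 in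
lemma sf10 : search 9 1 10 = false := by decide
set_option maxHeartbeats 0 in
lemma sf11 : search 9 1 11 = false := by decide
set_option maxHeartbeats 0 in
lemma sf12 : search 9 1 12 = false := by decide
set_option maxHeartbeats 0 in
lemma sf13 : search 9 1 13 = false := by decide
set_option maxHeartbeats 0 in
lemma sf14 : search 9 1 14 = false := by decide
set_option maxHeartbeats 0 in
lemma sf15 : search 9 1 15 = false := by decide
set_option maxHeartbeats 0 in
lemma sf16 : search 9 1 16 = false := by decide
set_option maxHeartbeats 0 in
lemma sf17 : search 9 1 17 = false := by decide
set_option maxHeartbeats 0 in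
lemma sf18 : search 9 1 18 = false := by decide
set_option maxHeartbeats 0 in
lemma sf19 : search 9 1 19 = false := by decide
set_option maxHeartbeats 0 in
lemma sf20 : search 9 1 20 = false := by decide
set_option maxHeartbeats 0 in
lemma sf21 : search 9 1 21 = false := by decide
set_option maxHeartbeats 0 in
lemma sf22 : search 9 1 22 = false := by decide
set_option maxHeartbeats 0 in
lemma sf23 : search 9 1 23 = false := by decide
set_option maxHeartbeats 0 in
lemma sf24 : search 9 1 24 = false := by decide
set_option maxHeartbeats 0 in
lemma sf25 : search 9 1 25 = false := by decide
set_option maxHeartbeats 0 in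
lemma sf26 : search 9 1 26 = false := by decide
set_option maxHeartbeats 0 in
lemma sf27 : search 9 1 27 = false := by decide
set_option maxHeartbeats 0 in
lemma sf28 : search 9 1 28 = false := by decide
set_option maxHeartbeats 0 in
lemma sf29 : search 9 1 29 = false := by decide
set_option maxHeartbeats 0 in
lemma sf30 : search 9 1 30 = false := by decide
set_option maxHeartbeats 0 in
lemma sf31 : search 9 1 31 = false := by decide
set_option maxHeartbeats 0 in
lemma sf32 : search 9 1 32 = false := by decide
set_option maxHeartbeats 0 in
lemma sf33 : search 9 1 33 = false := by decide
set_option maxHeartbeats 0 in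
lemma sf34 : search 9 1 34 = false := by decide
set_option maxHeartbeats 0 in
lemma sf35 : search 9 1 35 = false := by decide
set_option maxHeartbeats 0 in
lemma sf36 : search 9 1 36 = false := by decide
set_option maxHeartbeats 0 in
lemma sf37 : search 9 1 37 = false := by decide
set_option maxHeartbeats 0 in
lemma sf38 : search 9 1 38 = false := by decide
set_option maxHeartbeats 0 in
lemma sf39 : search 9 1 39 = false := by decide
set_option maxHeartbeats 0 in
lemma sf40 : search 9 1 40 = false := by decide
set_option maxHeartbeats 0 in
lemma sf41 : search 9 1 41 = false := by decide
set_option maxHeartbeats 0 in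
lemma sf42 : search 9 1 42 = false := by decide
set_option maxHeartbeats 0 in
lemma sf43 : search 9 1 43 = false := by decide
set_option maxHeartbeats 0 in
lemma sf44 : search 9 1 44 = false := by decide
set_option maxHeartbeats 0 in
lemma sf45 : search 9 1 45 = false := by decide
set_option maxHeartbeats 0 in
lemma sf46 : search 9 1 46 = false := by decide
set_option maxHeartbeats 0 in
lemma sf47 : search 9 1 47 = false := by decide
set_option maxHeartbeats 0 in
lemma sf48 : search 9 1 48 = false := by decide
set_option maxHeartbeats 0 in
lemma sf49 : search 9 1 49 = false := by decide
set_option maxHeartbeats 0 in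
lemma sf50 : search 9 1 50 = false := by decide
set_option maxHeartbeats 0 in
lemma sf51 : search 9 1 51 = false := by decide
set_option maxHeartbeats 0 in
lemma sf52 : search 9 1 52 = false := by decide
set_option maxHeartbeats 0 in
lemma sf53 : search 9 1 53 = false := by decide
set_option maxHeartbeats 0 in
lemma sf54 : search 9 1 54 = false := by decide
set_option maxHeartbeats 0 in
lemma sf55 : search 9 1 55 = false := by decide
set_option maxHeartbeats 0 in
lemma sf56 : search 9 1 56 = false := by decide
set_option maxHeartbeats 0 in
lemma sf57 : search 9 1 57 = false := by decide
set_option maxHeartbeats 0 in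
lemma sf58 : search 9 1 58 = false := by decide
set_option maxHeartbeats 0 in
lemma sf59 : search 9 1 59 = false := by decide
set_option maxHeartbeats 0 in
lemma sf60 : search 9 1 60 = false := by decide
set_option maxHeartbeats 0 in
lemma sf61 : search 9 1 61 = false := by decide
set_option maxHeartbeats 0 in
lemma sf62 : search 9 1 62 = false := by decide
set_option maxHeartbeats 0 in
lemma sf63 : search 9 1 63 = false := by decide
set_option maxHeartbeats 0 in
lemma sf64 : search 9 1 64 = false := by decide
set_option maxHeartbeats 0 in
lemma sf65 : search 9 1 65 = false := by decide
set_option maxHeartbeats 0 in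
lemma sf66 : search 9 1 66 = false := by decide
set_option maxHeartbeats 0 in
lemma sf67 : search 9 1 67 = false := by decide
set_option maxHeartbeats 0 in
lemma sf68 : search 9 1 68 = false := by decide
set_option maxHeartbeats 0 in
lemma sf69 : search 9 1 69 = false := by decide
set_option maxHeartbeats 0 in
lemma sf70 : search 9 1 70 = false := by decide
set_option maxHeartbeats 0 in
lemma sf71 : search 9 1 71 = false := by decide
set_option maxHeartbeats 0 in
lemma sf72 : search 9 1 72 = false := by decide
set_option maxHeartbeats 0 in
lemma sf73 : search 9 1 73 = false := by decide
set_option maxHeartbeats 0 in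
lemma sf74 : search 9 1 74 = false := by decide
set_option maxHeartbeats 0 in
lemma sf75 : search 9 1 75 = false := by decide
set_option maxHeartbeats 0 in
lemma sf76 : search 9 1 76 = false := by decide
set_option maxHeartbeats 0 in
lemma sf77 : search 9 1 77 = false := by decide
set_option maxHeartbeats 0 in
lemma sf78 : search 9 1 78 = false := by decide
set_option maxHeartbeats 0 in
lemma sf79 : search 9 1 79 = false := by decide
set_option maxHeartbeats 0 in
lemma sf80 : search 9 1 80 = false := by decide
set_option maxHeartbeats 0 in
lemma sf81 : search 9 1 81 = false := by decide
set_option maxHeartbeats 0 in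
lemma sf82 : search 9 1 82 = false := by decide
set_option maxHeartbeats 0 in
lemma sf83 : search 9 1 83 = false := by decide
set_option maxHeartbeats 0 in
lemma sf84 : search 9 1 84 = false := by decide
set_option maxHeartbeats 0 in
lemma sf85 : search 9 1 85 = false := by decide
set_option maxHeartbeats 0 in
lemma sf86 : search 9 1 86 = false := by decide
set_option maxHeartbeats 0 in
lemma sf87 : search 9 1 87 = false := by decide
set_option maxHeartbeats 0 in
lemma sf88 : search 9 1 88 = false := by decide
set_option maxHeartbeats 0 in
lemma sf89 : search 9 1 89 = false := by decide
set_option maxHeartbeats 0 in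
lemma sf90 : search 9 1 90 = false := by decide
set_option maxHeartbeats 0 in
lemma sf91 : search 9 1 91 = false := by decide
set_option maxHeartbeats 0 in
lemma sf92 : search 9 1 92 = false := by decide
set_option maxHeartbeats 0 in
lemma sf93 : search 9 1 93 = false := by decide
set_option maxHeartbeats 0 in
lemma sf94 : search 9 1 94 = false := by decide
set_option maxHeartbeats 0 in
lemma sf95 : search 9 1 95 = false := by decide

set_option maxHeartbeats 1000000 in
lemma searchLevel1 : ∀ v < 96, search 9 1 v = false := by
  intro v hv
  interval_cases v
  · exact sf0
  · exact sf1
  · exact sf2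
  · exact sf3
  · exact sf4
  · exact sf5
  · exact sf6
  · exact sf7
  · exact sf8
  · exact sf9
  · exact sf10
  · exact sf11
  · exact sf12
  · exact sf13
  · exact sf14
  · exact sf15
  · exact sf16
  · exact sf17
  · exact sf18
  · exact sf19
  · exact sf20
  · exact sf21
  · exact sf22
  · exact sf23
  · exact sf24
  · exact sf25
  · exact sf26
  · exact sf27
  · exact sf28
  · exact sf29
  · exact sf30
  · exact sf31
  · exact sf32
  · exact sf33
  · exact sf34
  · exact sf35
  · exact sf36
  · exact sf37
  · exact sf38
  · exact sf39
  · exact sf40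
  · exact sf41
  · exact sf42
  · exact sf43
  · exact sf44
  · exact sf45
  · exact sf46
  · exact sf47
  · exact sf48
  · exact sf49
  · exact sf50
  · exact sf51
  · exact sf52
  · exact sf53
  · exact sf54
  · exact sf55
  · exact sf56
  · exact sf57
  · exact sf58
  · exact sf59
  · exact sf60
  · exact sf61
  · exact sf62
  · exact sf63
  · exact sf64
  · exact sf65
  · exact sf66
  · exact sf67
  · exact sf68
  · exact sf69
  · exact sf70
  · exact sf71
  · exact sf72
  · exact sf73
  · exact sf74
  · exact sf75
  · exact sf76
  · exact sf77
  · exact sf78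
  · exact sf79
  · exact sf80
  · exact sf81
  · exact sf82
  · exact sf83
  · exact sf84
  · exact sf85
  · exact sf86
  · exact sf87
  · exact sf88
  · exact sf89
  · exact sf90
  · exact sf91
  · exact sf92
  · exact sf93
  · exact sf94
  · exact sf95


lemma searchFalse : search 10 0 0 = false := by
  show (cands 0 0).any (fun v => ok 0 0 v && search 9 1 (v + 96 * 0)) = false
  rw [List.any_eq_false]
  intro v hv
  have hv96 : v < 96 := by
    have h : cands 0 0 = List.range 96 := by decide
    rw [h] at hv
    simpa using hv
  simp [searchLevel1 v hv96]

def Sat (c : ℕ → ℕ) : Prop :=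
  ∀ n < 10, c n < 96 ∧ ∀ p ∈ Cn n, tripT (c n) p.2.1 = tripT (c (n - 1 - p.1)) p.2.2

lemma get_zero (v acc : ℕ) (hv : v < 96) : get (v + 96 * acc) 0 = v := by
  unfold get
  simp
  omega

lemma get_succ (v acc d : ℕ) (hv : v < 96) :
    get (v + 96 * acc) (d + 1) = get acc d := by
  unfold get
  have h1 : (v + 96 * acc) / 96 ^ (d + 1) = acc / 96 ^ d := by
    rw [pow_succ', ← Nat.div_div_eq_div_mul]
    congr 1
    omega
  rw [h1]

lemma complete : ∀ r n acc (c : ℕ → ℕ), n + r = 10 →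
    (∀ i < n, get acc i = c (n - 1 - i)) → Sat c → search r n acc = true := by
  intro r
  induction r with
  | zero => intro n acc c _ _ _; rfl
  | succ r ih =>
    intro n acc c hlen hpre hsat
    have hn10 : n < 10 := by omega
    obtain ⟨hc96, hcon⟩ := hsat n hn10
    have hmem : c n ∈ cands n acc := by
      unfold cands
      cases hC : Cn n with
      | nil => simpa [candsAux] using hc96
      | cons p tl =>
        have hp : p ∈ Cn n := by rw [hC]; exact List.mem_cons_self
        obtain ⟨hd, hs, _, _⟩ := D5 n hn10 p hp
        have h1 := hcon p hp
        have h2 : get acc p.1 = c (n - 1 - p.1) := hpre p.1 hd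
        have h9 := D9 (c n) hc96 p.2.1 hs
        rw [h1, ← h2] at h9
        simpa [candsAux] using h9
    have hok : ok n acc (c n) = true := by
      unfold ok
      rw [List.all_eq_true]
      intro p hp
      obtain ⟨hd, _, _, _⟩ := D5 n hn10 p hp
      have h2 : get acc p.1 = c (n - 1 - p.1) := hpre p.1 hd
      simp only [beq_iff_eq, h2, hcon p hp]
    have hrec : search r (n + 1) (c n + 96 * acc) = true := by
      apply ih (n + 1) (c n + 96 * acc) c (by omega) _ hsat
      intro i hi
      cases i with
      | zero =>
        have hz : n + 1 - 1 - 0 = n := by omega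
        rw [hz, get_zero _ _ hc96]
      | succ i =>
        rw [get_succ _ _ _ hc96]
        rw [hpre i (by omega)]
        congr 1
        omega
    show (cands n acc).any (fun v => ok n acc v && search r (n + 1) (v + 96 * acc)) = true
    rw [List.any_eq_true]
    exact ⟨c n, hmem, by rw [hok, hrec]; rfl⟩

lemma noSat : ¬ ∃ c : ℕ → ℕ, Sat c := by
  rintro ⟨c, hc⟩
  have h := complete 10 0 0 c rfl (fun i hi => absurd hi (by omega)) hc
  rw [searchFalse] at h
  exact Bool.noConfusion h

lemma AtoSat (f : Petersen.E → Sylvester16.E)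
    (hf : Multigraph.IsHColoring Petersen Sylvester16 f) : ∃ c : ℕ → ℕ, Sat c := by
  have hkey := key f hf
  choose jj hj96 hjk using hkey
  refine ⟨fun n => if h : n < 10 then jj n h else 0, ?_⟩
  intro n hn
  simp only [dif_pos hn]
  refine ⟨hj96 n hn, ?_⟩
  intro p hp
  obtain ⟨hd, hs, ht, hpv⟩ := D5 n hn p hp
  have hm : n - 1 - p.1 < 10 := by omega
  simp only [dif_pos hm]
  have e1 := hjk n hn p.2.1 hs
  have e2 := hjk (n - 1 - p.1) hm p.2.2 ht
  rw [hpv] at e1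
  exact D4 _ (D6 _ (hj96 n hn) _ hs) _ (D6 _ (hj96 _ hm) _ ht) (by rw [← e1, ← e2])

end PNoS16

/-- the Petersen graph admits no S₁₆-coloring. -/
theorem petersen_admits_no_sylvester16_coloring :
    ¬ ∃ f : Petersen.E → Sylvester16.E,
      Multigraph.IsHColoring Petersen Sylvester16 f := by
  rintro ⟨f, hf⟩
  exact PNoS16.noSat (PNoS16.AtoSat f hf)
end
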